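/- arXiv:1601.07722 — 7 statements merged into one kernel-verified Lean document; each statement's English description precedes it below -/
import Mathlib

section
/- Let 1 ≤ p < ∞ and T > 0, let f ∈ L^p(ℝ; ℂ), and let F : (0,T) × ℝ → ℂ be measurable with ∫₀ᵀ ‖F(s,·)‖_{L^p(ℝ)} ds < ∞. Then the function (t,x) ↦ f(x−t) · ∫₀ᵗ F(s, x+t−s) ds satisfies (∫₀ᵀ ∫_ℝ |f(x−t) ∫₀ᵗ F(s, x+t−s) ds|^p dx dt)^{1/p} ≤ (1/2)^{1/p} ‖f‖_{L^p(ℝ)} ∫₀ᵀ ‖F(s,·)‖_{L^p(ℝ)} ds. -/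
set_option maxHeartbeats 1000000


open MeasureTheory Set
open scoped ENNReal NNReal

theorem my_minkowski {α β : Type*} [MeasurableSpace α] [MeasurableSpace β]
    (μ : Measure α) (ν : Measure β) [SigmaFinite μ] [SigmaFinite ν]
    (K : α → β → ℝ≥0∞) (hK : Measurable (Function.uncurry K))
    {r : ℝ} (hr : 1 ≤ r) :
    (∫⁻ y, (∫⁻ x, K x y ∂μ) ^ r ∂ν) ^ (1/r) ≤ ∫⁻ x, (∫⁻ y, (K x y) ^ r ∂ν) ^ (1/r) ∂μ := by
  rcases eq_or_lt_of_le hr with h1 | h1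
  · subst h1
    simp only [ENNReal.rpow_one, one_div_one]
    exact le_of_eq (lintegral_lintegral_swap hK.aemeasurable).symm
  have hr0 : (0:ℝ) < r := lt_trans one_pos h1
  set R := ∫⁻ x, (∫⁻ y, (K x y) ^ r ∂ν) ^ (1/r) ∂μ with hR
  set r' : ℝ := r / (r - 1) with hr'
  have hconj : r.HolderConjugate r' := Real.HolderConjugate.conjExponent h1
  have hΦm : Measurable (fun y => ∫⁻ x, K x y ∂μ) := hK.lintegral_prod_left
  set Φ : β → ℝ≥0∞ := fun y => ∫⁻ x, K x y ∂μ with hΦ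
  set A : ℕ → Set β := spanningSets ν with hA
  set a : ℕ → ℝ≥0∞ := fun n => ∫⁻ y in A n, (min (Φ y) n) ^ r ∂ν with ha
  have hAm : ∀ n, MeasurableSet (A n) := measurableSet_spanningSets ν
  have hminm : ∀ n : ℕ, Measurable (fun y => (min (Φ y) (n:ℝ≥0∞)) ^ r) :=
    fun n => (hΦm.min measurable_const).pow_const r
  have han : ∀ n, a n ≠ ⊤ := by
    intro n
    have : a n ≤ ∫⁻ _ in A n, ((n:ℝ≥0∞)) ^ r ∂ν := by
      refine lintegral_mono fun y => ?_
      exact ENNReal.rpow_le_rpow (min_le_right _ _) hr0.le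
    rw [setLIntegral_const] at this
    exact ne_top_of_le_ne_top
      (ENNReal.mul_ne_top (ENNReal.rpow_ne_top_of_nonneg hr0.le (ENNReal.natCast_ne_top n))
        (measure_spanningSets_lt_top ν n).ne) this
  -- key inequality
  have key : ∀ n, a n ≤ a n ^ (1/r') * R := by
    intro n
    have step1 : a n ≤ ∫⁻ y in A n, (min (Φ y) n) ^ (r-1) * Φ y ∂ν := by
      refine lintegral_mono fun y => ?_
      rcases eq_or_ne (min (Φ y) (n:ℝ≥0∞)) 0 with h0 | h0
      · rw [h0, ENNReal.zero_rpow_of_pos hr0]; exact zero_le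
      · have hne : min (Φ y) (n:ℝ≥0∞) ≠ ⊤ :=
          ne_top_of_le_ne_top (ENNReal.natCast_ne_top n) (min_le_right _ _)
        calc (min (Φ y) n) ^ r = (min (Φ y) n) ^ ((r-1) + 1) := by ring_nf
          _ = (min (Φ y) n) ^ (r-1) * (min (Φ y) n) ^ (1:ℝ) := ENNReal.rpow_add _ _ h0 hne
          _ ≤ (min (Φ y) n) ^ (r-1) * Φ y := by
              rw [ENNReal.rpow_one]
              exact mul_le_mul_right (min_le_left _ _) _
    have step2 : ∫⁻ y in A n, (min (Φ y) n) ^ (r-1) * Φ y ∂ν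
        = ∫⁻ x, ∫⁻ y in A n, (min (Φ y) n) ^ (r-1) * K x y ∂ν ∂μ := by
      have e1 : ∀ y, (min (Φ y) n) ^ (r-1) * Φ y
          = ∫⁻ x, (min (Φ y) n) ^ (r-1) * K x y ∂μ := by
        intro y
        rw [lintegral_const_mul' _ _ (ENNReal.rpow_ne_top_of_nonneg (by linarith)
          (ne_top_of_le_ne_top (ENNReal.natCast_ne_top n) (min_le_right _ _)))]
      simp_rw [e1]
      refine (lintegral_lintegral_swap ?_)
      refine AEMeasurable.mul ?_ ?_
      · exact (((hΦm.min measurable_const).pow_const (r-1)).comp measurable_fst).aemeasurable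
      · exact (hK.comp measurable_swap).aemeasurable
    have step3 : ∀ x, ∫⁻ y in A n, (min (Φ y) n) ^ (r-1) * K x y ∂ν
        ≤ a n ^ (1/r') * (∫⁻ y, (K x y) ^ r ∂ν) ^ (1/r) := by
      intro x
      have hold := ENNReal.lintegral_mul_le_Lp_mul_Lq (ν.restrict (A n)) hconj.symm
        (f := fun y => (min (Φ y) n) ^ (r-1)) (g := fun y => K x y)
        ((hΦm.min measurable_const).pow_const (r-1)).aemeasurable
        (hK.comp (measurable_prodMk_left)).aemeasurable
      simp only [Pi.mul_apply] at hold
      refine hold.trans (mul_le_mul' (le_of_eq ?_) (ENNReal.rpow_le_rpow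
        (lintegral_mono' Measure.restrict_le_self le_rfl) (by positivity)))
      congr 1
      refine lintegral_congr fun y => ?_
      rw [← ENNReal.rpow_mul]
      congr 1
      exact hconj.sub_one_mul_conj
    calc a n ≤ ∫⁻ x, ∫⁻ y in A n, (min (Φ y) n) ^ (r-1) * K x y ∂ν ∂μ := step2 ▸ step1
      _ ≤ ∫⁻ x, a n ^ (1/r') * (∫⁻ y, (K x y) ^ r ∂ν) ^ (1/r) ∂μ :=
          lintegral_mono fun x => step3 x
      _ = a n ^ (1/r') * R := lintegral_const_mul' _ _
          (ENNReal.rpow_ne_top_of_nonneg (one_div_nonneg.mpr hconj.symm.pos.le) (han n))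
  -- deduce a n ≤ R ^ r
  have key2 : ∀ n, a n ≤ R ^ r := by
    intro n
    rcases eq_or_ne (a n) 0 with h0 | h0
    · rw [h0]; exact zero_le
    have hsum : 1/r' + 1/r = 1 := by
      rw [one_div, one_div, add_comm]; exact hconj.inv_add_inv_eq_one
    have hsplit : a n = a n ^ (1/r') * a n ^ (1/r) := by
      rw [← ENNReal.rpow_add _ _ h0 (han n), hsum, ENNReal.rpow_one]
    have hr'0 : (0:ℝ) ≤ 1/r' := one_div_nonneg.mpr hconj.symm.pos.le
    have hcancel : a n ^ (1/r) ≤ R := by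
      have hkey := hsplit.symm.trans_le (key n)
      have hne0 : a n ^ (1/r') ≠ 0 := (ENNReal.rpow_pos (pos_iff_ne_zero.mpr h0) (han n)).ne'
      have hnetop : a n ^ (1/r') ≠ ⊤ := ENNReal.rpow_ne_top_of_nonneg hr'0 (han n)
      exact (ENNReal.mul_le_mul_iff_right hne0 hnetop).mp hkey
    calc a n = (a n ^ (1/r)) ^ r := by
          rw [← ENNReal.rpow_mul, one_div, inv_mul_cancel₀ hr0.ne', ENNReal.rpow_one]
      _ ≤ R ^ r := ENNReal.rpow_le_rpow hcancel hr0.le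
  -- monotone convergence
  have hsup : ∫⁻ y, Φ y ^ r ∂ν ≤ ⨆ n, a n := by
    have mono : Monotone (fun n : ℕ => (A n).indicator (fun y => (min (Φ y) (n:ℝ≥0∞)) ^ r)) := by
      intro n k hnk y
      dsimp only
      by_cases hy : y ∈ A n
      · rw [indicator_of_mem hy, indicator_of_mem (monotone_spanningSets ν hnk hy)]
        exact ENNReal.rpow_le_rpow (min_le_min le_rfl (Nat.cast_le.mpr hnk)) hr0.le
      · rw [indicator_of_notMem hy]; exact zero_le
    have ptw : ∀ y, Φ y ^ r ≤ ⨆ n, (A n).indicator (fun y => (min (Φ y) (n:ℝ≥0∞)) ^ r) y := by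
      intro y
      have hy : y ∈ ⋃ n, A n := by rw [hA, iUnion_spanningSets]; trivial
      obtain ⟨m, hm⟩ := mem_iUnion.mp hy
      rcases eq_or_ne (Φ y) ⊤ with htop | htop
      · rw [htop, ENNReal.top_rpow_of_pos hr0]
        have hbig : ∀ N : ℕ, (N:ℝ≥0∞)
            ≤ ⨆ n, (A n).indicator (fun y => (min (Φ y) (n:ℝ≥0∞)) ^ r) y := by
          intro N
          refine le_iSup_of_le (max m N) ?_
          rw [indicator_of_mem (monotone_spanningSets ν (le_max_left m N) hm), htop,
            min_eq_right le_top]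
          rcases Nat.eq_zero_or_pos N with h | h
          · simp [h]
          · have h1c : (1:ℝ≥0∞) ≤ ((max m N : ℕ) : ℝ≥0∞) := by
              exact_mod_cast Nat.one_le_iff_ne_zero.mpr (by omega)
            calc (N:ℝ≥0∞) ≤ ((max m N : ℕ) : ℝ≥0∞) := Nat.cast_le.mpr (le_max_right m N)
              _ = ((max m N : ℕ) : ℝ≥0∞) ^ (1:ℝ) := (ENNReal.rpow_one _).symm
              _ ≤ ((max m N : ℕ) : ℝ≥0∞) ^ r := ENNReal.rpow_le_rpow_of_exponent_le h1c hr
        calc (⊤:ℝ≥0∞) = ⨆ N : ℕ, (N:ℝ≥0∞) := ENNReal.iSup_natCast.symm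
          _ ≤ _ := iSup_le hbig
      · obtain ⟨N, hN⟩ := ENNReal.exists_nat_gt htop
        refine le_iSup_of_le (max m N) ?_
        rw [indicator_of_mem (monotone_spanningSets ν (le_max_left m N) hm)]
        rw [min_eq_left (hN.le.trans (Nat.cast_le.mpr (le_max_right m N)))]
    calc ∫⁻ y, Φ y ^ r ∂ν
        ≤ ∫⁻ y, ⨆ n, (A n).indicator (fun y => (min (Φ y) (n:ℝ≥0∞)) ^ r) y ∂ν :=
          lintegral_mono ptw
      _ = ⨆ n, ∫⁻ y, (A n).indicator (fun y => (min (Φ y) (n:ℝ≥0∞)) ^ r) y ∂ν :=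
          lintegral_iSup (fun n => (hminm n).indicator (hAm n)) mono
      _ = ⨆ n, a n := by
          refine iSup_congr fun n => ?_
          rw [lintegral_indicator (hAm n)]
  calc (∫⁻ y, Φ y ^ r ∂ν) ^ (1/r) ≤ (R ^ r) ^ (1/r) :=
        ENNReal.rpow_le_rpow (hsup.trans (iSup_le key2)) (by positivity)
    _ = R := by rw [one_div, ENNReal.rpow_rpow_inv hr0.ne']


/-- Bilinear estimate in `L^p((0,T)×ℝ)` for the product of a free right-moving
wave `f(x−t)` with the Duhamel term of the left-moving transport equation
`∂ₜu − ∂ₓu = F` with zero data. -/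
theorem bilinear_estimate_free_times_duhamel
    (p : ℝ≥0∞) (hp : 1 ≤ p) (hp' : p ≠ ⊤)
    (T : ℝ) (hT : 0 < T)
    (f : ℝ → ℂ) (hf : MemLp f p volume)
    (F : ℝ → ℝ → ℂ) (hFmeas : Measurable (Function.uncurry F))
    (hFint : (∫⁻ s in Ioo (0:ℝ) T, eLpNorm (F s) p volume) < ⊤) :
    eLpNorm
        (fun q : ℝ × ℝ => f (q.2 - q.1) * (∫ s in (0:ℝ)..q.1, F s (q.2 + q.1 - s))) p
        ((volume.restrict (Ioo (0:ℝ) T)).prod volume)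
      ≤ (1/2 : ℝ≥0∞) ^ (1/p.toReal) * eLpNorm f p volume *
          (∫⁻ s in Ioo (0:ℝ) T, eLpNorm (F s) p volume) := by
  have hp0 : p ≠ 0 := (lt_of_lt_of_le zero_lt_one hp).ne'
  have hr1 : 1 ≤ p.toReal := by
    rw [← ENNReal.toReal_one]; exact ENNReal.toReal_mono hp' hp
  set r : ℝ := p.toReal with hrdef
  have hr0 : (0:ℝ) < r := lt_of_lt_of_le one_pos hr1
  obtain ⟨hfm, hffin⟩ := hf
  set g : ℝ → ℂ := hfm.mk f with hgdef
  have hgsm : StronglyMeasurable g := hfm.stronglyMeasurable_mk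
  have hfg : f =ᵐ[volume] g := hfm.ae_eq_mk
  have hgm : Measurable g := hgsm.measurable
  have hfg' : eLpNorm f p volume = eLpNorm g p volume := eLpNorm_congr_ae hfg
  have hprodeq : (volume.restrict (Ioo (0:ℝ) T)).prod (volume : Measure ℝ)
      = ((volume : Measure ℝ).prod volume).restrict (Ioo (0:ℝ) T ×ˢ univ) := by
    rw [← Measure.prod_restrict, Measure.restrict_univ]
  -- a.e. replacement of f by g in the product
  have hae : (fun q : ℝ×ℝ => f (q.2 - q.1))
      =ᵐ[(volume.restrict (Ioo (0:ℝ) T)).prod volume] (fun q : ℝ×ℝ => g (q.2 - q.1)) := by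
    obtain ⟨N, hNsub, hNm, hN0⟩ :=
      exists_measurable_superset_of_null (ae_iff.mp hfg)
    have hS : ((volume.restrict (Ioo (0:ℝ) T)).prod volume) {q : ℝ×ℝ | q.2 - q.1 ∈ N} = 0 := by
      have hSm : MeasurableSet {q : ℝ×ℝ | q.2 - q.1 ∈ N} :=
        (measurable_snd.sub measurable_fst) hNm
      rw [Measure.prod_apply hSm]
      have hz : ∀ t : ℝ, volume (Prod.mk t ⁻¹' {q : ℝ×ℝ | q.2 - q.1 ∈ N}) = (0:ℝ≥0∞) := by
        intro t
        have he : (Prod.mk t ⁻¹' {q : ℝ×ℝ | q.2 - q.1 ∈ N}) = (fun x => x + (-t)) ⁻¹' N := by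
          ext x; simp [sub_eq_add_neg]
        rw [he, measure_preimage_add_right]
        exact hN0
      rw [lintegral_congr hz, lintegral_zero]
    exact ae_iff.mpr (measure_mono_null (fun q hq => hNsub hq) hS)
  rw [eLpNorm_congr_ae (show (fun q : ℝ×ℝ => f (q.2 - q.1) * ∫ s in (0:ℝ)..q.1, F s (q.2 + q.1 - s)) =ᵐ[_] (fun q : ℝ×ℝ => g (q.2 - q.1) * ∫ s in (0:ℝ)..q.1, F s (q.2 + q.1 - s)) from hae.mul (Filter.EventuallyEq.refl _ _)), hfg']
  -- the kernel
  set K : ℝ → ℝ × ℝ → ℝ≥0∞ := fun s q =>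
    (‖g (q.2 - q.1)‖₊ : ℝ≥0∞) *
      ((Ioc (0:ℝ) q.1).indicator (fun s' => (‖F s' (q.2 + q.1 - s')‖₊ : ℝ≥0∞)) s) with hKdef
  have hKmeas : Measurable (Function.uncurry K) := by
    refine Measurable.mul ?_ ?_
    · exact (hgm.comp ((measurable_snd.comp measurable_snd).sub
        (measurable_fst.comp measurable_snd))).nnnorm.coe_nnreal_ennreal
    · have he : (fun z : ℝ × (ℝ×ℝ) =>
          (Ioc (0:ℝ) z.2.1).indicator (fun s' => (‖F s' (z.2.2 + z.2.1 - s')‖₊ : ℝ≥0∞)) z.1)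
          = fun z => {w : ℝ × (ℝ×ℝ) | 0 < w.1 ∧ w.1 ≤ w.2.1}.indicator
              (fun w => (‖F w.1 (w.2.2 + w.2.1 - w.1)‖₊ : ℝ≥0∞)) z := by
        funext z
        simp only [Set.indicator_apply, Set.mem_Ioc, Set.mem_setOf_eq]
      exact he ▸ Measurable.indicator
        ((hFmeas.comp (measurable_fst.prodMk
          (((measurable_snd.comp measurable_snd).add
            (measurable_fst.comp measurable_snd)).sub measurable_fst))).nnnorm.coe_nnreal_ennreal)
        ((measurableSet_lt measurable_const measurable_fst).inter
          (measurableSet_le measurable_fst (measurable_fst.comp measurable_snd)))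
  -- pointwise a.e. bound by the kernel integral
  have hq : ∀ᵐ q ∂((volume.restrict (Ioo (0:ℝ) T)).prod (volume : Measure ℝ)),
      q ∈ Ioo (0:ℝ) T ×ˢ (univ : Set ℝ) := by
    rw [hprodeq]
    exact ae_restrict_mem (measurableSet_Ioo.prod MeasurableSet.univ)
  have stepA : ∀ᵐ q ∂((volume.restrict (Ioo (0:ℝ) T)).prod (volume : Measure ℝ)),
      (‖g (q.2 - q.1) * ∫ s in (0:ℝ)..q.1, F s (q.2 + q.1 - s)‖₊ : ℝ≥0∞) ^ r
        ≤ (∫⁻ s in Ioo (0:ℝ) T, K s q ∂volume) ^ r := by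
    filter_upwards [hq] with q hq'
    have ht : q.1 ∈ Ioo (0:ℝ) T := hq'.1
    refine ENNReal.rpow_le_rpow ?_ hr0.le
    rw [nnnorm_mul, ENNReal.coe_mul]
    have hcm : ∫⁻ s in Ioo (0:ℝ) T, K s q ∂volume
        = (‖g (q.2 - q.1)‖₊ : ℝ≥0∞) *
          ∫⁻ s in Ioo (0:ℝ) T,
            (Ioc (0:ℝ) q.1).indicator (fun s' => (‖F s' (q.2 + q.1 - s')‖₊ : ℝ≥0∞)) s
              ∂volume :=
      lintegral_const_mul' _ _ ENNReal.coe_ne_top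
    rw [hcm]
    refine mul_le_mul_right ?_ _
    rw [intervalIntegral.integral_of_le ht.1.le]
    refine (enorm_integral_le_lintegral_enorm _).trans (le_of_eq ?_)
    rw [lintegral_indicator measurableSet_Ioc, Measure.restrict_restrict measurableSet_Ioc,
      inter_eq_self_of_subset_left (fun s hs => mem_Ioo.mpr
        ⟨(mem_Ioc.mp hs).1, lt_of_le_of_lt (mem_Ioc.mp hs).2 ht.2⟩)]
    rfl
  -- per-s estimate
  have claim : ∀ s : ℝ,
      (∫⁻ q, K s q ^ r ∂((volume.restrict (Ioo (0:ℝ) T)).prod volume))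
        ≤ (1/2 : ℝ≥0∞) * (∫⁻ x, (‖g x‖₊ : ℝ≥0∞) ^ r)
            * (∫⁻ v, (‖F s v‖₊ : ℝ≥0∞) ^ r) := by
    intro s
    have hFs : Measurable (F s) := hFmeas.of_uncurry_left
    have step0 : ∀ q : ℝ×ℝ, K s q ^ r
        ≤ ((‖g (q.2 - q.1)‖₊ : ℝ≥0∞) ^ r) * ((‖F s (q.2 + q.1 - s)‖₊ : ℝ≥0∞) ^ r) := by
      intro q
      by_cases hs : s ∈ Ioc (0:ℝ) q.1
      · rw [hKdef]
        dsimp only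
        rw [indicator_of_mem hs, ENNReal.mul_rpow_of_nonneg _ _ hr0.le]
      · rw [hKdef]
        dsimp only
        rw [indicator_of_notMem hs, mul_zero, ENNReal.zero_rpow_of_pos hr0]
        exact zero_le
    have hGm : Measurable fun x : ℝ => (‖g x‖₊ : ℝ≥0∞) ^ r := hgm.nnnorm.coe_nnreal_ennreal.pow_const r
    have hFrm : Measurable fun v : ℝ => (‖F s v‖₊ : ℝ≥0∞) ^ r := hFs.nnnorm.coe_nnreal_ennreal.pow_const r
    have hscale : ∀ c : ℝ,
        ∫⁻ t, (‖F s (2*t + c)‖₊ : ℝ≥0∞) ^ r ∂volume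
          = (1/2 : ℝ≥0∞) * ∫⁻ v, (‖F s v‖₊ : ℝ≥0∞) ^ r := by
      intro c
      have hm : Measurable fun v : ℝ => (‖F s (v + c)‖₊ : ℝ≥0∞) ^ r :=
        ((hFs.comp (measurable_add_const c)).nnnorm.coe_nnreal_ennreal).pow_const r
      have h1 : ∫⁻ v, (‖F s (v + c)‖₊ : ℝ≥0∞) ^ r
            ∂(Measure.map (fun t : ℝ => 2*t) volume)
          = ∫⁻ t, (‖F s (2*t + c)‖₊ : ℝ≥0∞) ^ r ∂volume :=
        lintegral_map hm (measurable_const_mul 2)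
      rw [← h1, Real.map_volume_mul_left (two_ne_zero), lintegral_smul_measure,
        lintegral_add_right_eq_self (fun v => (‖F s v‖₊ : ℝ≥0∞) ^ r) c]
      congr 1
      rw [abs_of_pos (by norm_num : (0:ℝ) < 2⁻¹), ENNReal.ofReal_inv_of_pos two_pos,
        ENNReal.ofReal_ofNat, one_div]
    calc ∫⁻ q, K s q ^ r ∂((volume.restrict (Ioo (0:ℝ) T)).prod volume)
        ≤ ∫⁻ q : ℝ×ℝ, ((‖g (q.2 - q.1)‖₊ : ℝ≥0∞) ^ r) * ((‖F s (q.2 + q.1 - s)‖₊ : ℝ≥0∞) ^ r)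
            ∂((volume.restrict (Ioo (0:ℝ) T)).prod volume) := lintegral_mono step0
      _ ≤ ∫⁻ q : ℝ×ℝ, ((‖g (q.2 - q.1)‖₊ : ℝ≥0∞) ^ r) * ((‖F s (q.2 + q.1 - s)‖₊ : ℝ≥0∞) ^ r)
            ∂((volume : Measure ℝ).prod volume) := by
          rw [hprodeq]
          exact lintegral_mono' Measure.restrict_le_self le_rfl
      _ = ∫⁻ t, ∫⁻ x, ((‖g (x - t)‖₊ : ℝ≥0∞) ^ r) * ((‖F s (x + t - s)‖₊ : ℝ≥0∞) ^ r)
            ∂volume ∂volume := by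
          refine lintegral_prod _ ?_
          exact ((hgm.comp (measurable_snd.sub measurable_fst)).nnnorm.coe_nnreal_ennreal.pow_const r).aemeasurable.mul
            (((hFs.comp ((measurable_snd.add measurable_fst).sub measurable_const)).nnnorm.coe_nnreal_ennreal.pow_const r)).aemeasurable
      _ = ∫⁻ t, ∫⁻ x, ((‖g x‖₊ : ℝ≥0∞) ^ r) * ((‖F s (2*t + (x - s))‖₊ : ℝ≥0∞) ^ r)
            ∂volume ∂volume := by
          refine lintegral_congr fun t => Eq.symm ?_
          calc ∫⁻ x, ((‖g x‖₊ : ℝ≥0∞) ^ r) * ((‖F s (2*t + (x - s))‖₊ : ℝ≥0∞) ^ r) ∂volume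
              = ∫⁻ x, (fun y => ((‖g (y - t)‖₊ : ℝ≥0∞) ^ r) * ((‖F s (y + t - s)‖₊ : ℝ≥0∞) ^ r))
                  (x + t) ∂volume := by
                refine lintegral_congr fun x => ?_
                have e1 : x + t - t = x := by ring
                have e2 : x + t + t - s = 2*t + (x - s) := by ring
                dsimp only
                rw [e1, e2]
            _ = ∫⁻ x, ((‖g (x - t)‖₊ : ℝ≥0∞) ^ r) * ((‖F s (x + t - s)‖₊ : ℝ≥0∞) ^ r) ∂volume := by
                exact lintegral_add_right_eq_self
                  (fun y => ((‖g (y - t)‖₊ : ℝ≥0∞) ^ r) * ((‖F s (y + t - s)‖₊ : ℝ≥0∞) ^ r)) t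
      _ = ∫⁻ x, ∫⁻ t, ((‖g x‖₊ : ℝ≥0∞) ^ r) * ((‖F s (2*t + (x - s))‖₊ : ℝ≥0∞) ^ r)
            ∂volume ∂volume := by
          refine lintegral_lintegral_swap ?_
          exact ((hgm.comp measurable_snd).nnnorm.coe_nnreal_ennreal.pow_const r).aemeasurable.mul
            ((hFs.comp (((measurable_const.mul measurable_fst)).add
              (measurable_snd.sub measurable_const))).nnnorm.coe_nnreal_ennreal.pow_const r).aemeasurable
      _ = ∫⁻ x, ((‖g x‖₊ : ℝ≥0∞) ^ r) * ((1/2 : ℝ≥0∞) * ∫⁻ v, (‖F s v‖₊ : ℝ≥0∞) ^ r)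
            ∂volume := by
          refine lintegral_congr fun x => ?_
          rw [lintegral_const_mul' _ _
            (ENNReal.rpow_ne_top_of_nonneg hr0.le ENNReal.coe_ne_top), hscale (x - s)]
      _ = (1/2 : ℝ≥0∞) * (∫⁻ x, (‖g x‖₊ : ℝ≥0∞) ^ r) * (∫⁻ v, (‖F s v‖₊ : ℝ≥0∞) ^ r) := by
          rw [lintegral_mul_const _ hGm]
          ring
  have claim2 : ∀ s : ℝ,
      (∫⁻ q, K s q ^ r ∂((volume.restrict (Ioo (0:ℝ) T)).prod volume)) ^ (1/r)
        ≤ (1/2 : ℝ≥0∞) ^ (1/r) * eLpNorm g p volume * eLpNorm (F s) p volume := by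
    intro s
    have h := ENNReal.rpow_le_rpow (claim s) (one_div_nonneg.mpr hr0.le)
    refine h.trans (le_of_eq ?_)
    rw [ENNReal.mul_rpow_of_nonneg _ _ (one_div_nonneg.mpr hr0.le),
      ENNReal.mul_rpow_of_nonneg _ _ (one_div_nonneg.mpr hr0.le),
      eLpNorm_eq_lintegral_rpow_enorm_toReal hp0 hp', eLpNorm_eq_lintegral_rpow_enorm_toReal hp0 hp']
    rfl
  have hgfin : eLpNorm g p volume ≠ ⊤ := by rw [← hfg']; exact hffin.ne
  have hCfin : (1/2 : ℝ≥0∞) ^ (1/r) * eLpNorm g p volume ≠ ⊤ :=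
    ENNReal.mul_ne_top (ENNReal.rpow_ne_top_of_nonneg (one_div_nonneg.mpr hr0.le)
      (by norm_num)) hgfin
  rw [eLpNorm_eq_lintegral_rpow_enorm_toReal hp0 hp']
  calc (∫⁻ q, (‖g (q.2 - q.1) * ∫ s in (0:ℝ)..q.1, F s (q.2 + q.1 - s)‖₊ : ℝ≥0∞) ^ r
          ∂((volume.restrict (Ioo (0:ℝ) T)).prod volume)) ^ (1/r)
      ≤ (∫⁻ q, (∫⁻ s in Ioo (0:ℝ) T, K s q ∂volume) ^ r
          ∂((volume.restrict (Ioo (0:ℝ) T)).prod volume)) ^ (1/r) :=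
        ENNReal.rpow_le_rpow (lintegral_mono_ae stepA) (one_div_nonneg.mpr hr0.le)
    _ ≤ ∫⁻ s in Ioo (0:ℝ) T,
          (∫⁻ q, K s q ^ r ∂((volume.restrict (Ioo (0:ℝ) T)).prod volume)) ^ (1/r)
          ∂volume :=
        my_minkowski (volume.restrict (Ioo (0:ℝ) T))
          ((volume.restrict (Ioo (0:ℝ) T)).prod volume) K hKmeas hr1
    _ ≤ ∫⁻ s in Ioo (0:ℝ) T,
          ((1/2 : ℝ≥0∞) ^ (1/r) * eLpNorm g p volume) * eLpNorm (F s) p volume ∂volume := by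
        refine lintegral_mono fun s => ?_
        exact claim2 s
    _ = (1/2 : ℝ≥0∞) ^ (1/r) * eLpNorm g p volume *
          ∫⁻ s in Ioo (0:ℝ) T, eLpNorm (F s) p volume ∂volume :=
        lintegral_const_mul' _ _ hCfin
end

section
/- Let 1 ≤ p < ∞ and T > 0, and let F, G : (0,T) × ℝ → ℂ be measurable with ∫₀ᵀ ‖F(s,·)‖_{L^p(ℝ)} ds < ∞ and ∫₀ᵀ ‖G(s,·)‖_{L^p(ℝ)} ds < ∞. Then (∫₀ᵀ ∫_ℝ |∫₀ᵗ F(s, x−t+s) ds · ∫₀ᵗ G(s', x+t−s') ds'|^p dx dt)^{1/p} ≤ (1/2)^{1/p} (∫₀ᵀ ‖F(s,·)‖_{L^p(ℝ)} ds)(∫₀ᵀ ‖G(s,·)‖_{L^p(ℝ)} ds). -/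
open MeasureTheory Set
open scoped ENNReal NNReal

set_option maxHeartbeats 1000000

lemma ennreal_rpow_iSup {ι : Sort*} [Nonempty ι] (f : ι → ℝ≥0∞) {c : ℝ} (hc : 0 < c) :
    (⨆ i, f i) ^ c = ⨆ i, f i ^ c := by
  have := (ENNReal.orderIsoRpow c hc).map_iSup f
  simp only [ENNReal.orderIsoRpow_apply] at this
  exact this

lemma minkowski_lintegral {q : ℝ} (hq : 1 ≤ q) {S : Set ℝ}
    {h : ℝ → ℝ → ℝ≥0∞} (hh : Measurable (Function.uncurry h)) :
    (∫⁻ u, (∫⁻ s in S, h s u) ^ q) ^ (1/q) ≤ ∫⁻ s in S, (∫⁻ u, h s u ^ q) ^ (1/q) := by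
  have hq0 : 0 < q := lt_of_lt_of_le one_pos hq
  have hswap : Measurable (Function.uncurry fun (u s : ℝ) => h s u) :=
    hh.comp measurable_swap
  have hΦ : Measurable fun u => ∫⁻ s in S, h s u :=
    Measurable.lintegral_prod_right (f := fun u s => h s u) hswap
  set Φ : ℝ → ℝ≥0∞ := fun u => ∫⁻ s in S, h s u with hΦdef
  have hhs : ∀ s : ℝ, Measurable fun u => h s u := fun s =>
    hh.comp (measurable_prodMk_left)
  have hhu : ∀ u : ℝ, Measurable fun s => h s u := fun u =>
    hh.comp (measurable_prodMk_right)
  rcases eq_or_lt_of_le hq with hq1 | hq1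
  · simp only [← hq1]
    norm_num
    rw [lintegral_lintegral_swap (f := fun u s => h s u) hswap.aemeasurable]
  set M := ∫⁻ s in S, (∫⁻ u, h s u ^ q) ^ (1/q) with hM
  by_cases hMtop : M = ⊤
  · rw [hMtop]; exact le_top
  set q' := q / (q - 1) with hq'
  have hqq' : q.HolderConjugate q' := Real.HolderConjugate.conjExponent hq1
  set Ψ : ℕ → ℝ → ℝ≥0∞ := fun n u => (Icc (-(n:ℝ)) n).indicator (fun u => min (Φ u) n) u with hΨdef
  have hΨmeas : ∀ n, Measurable (Ψ n) := fun n =>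
    (hΦ.min measurable_const).indicator measurableSet_Icc
  have hΨle : ∀ n u, Ψ n u ≤ Φ u := by
    intro n u
    refine le_trans (Set.indicator_le_self _ _ u) (min_le_left _ _)
  have hΨmono : Monotone Ψ := by
    intro m n hmn u
    by_cases hu : u ∈ Icc (-(m:ℝ)) m
    · have hu' : u ∈ Icc (-(n:ℝ)) n := by
        rcases hu with ⟨h1, h2⟩
        exact ⟨le_trans (by exact_mod_cast neg_le_neg (Nat.cast_le.2 hmn)) h1,
          le_trans h2 (by exact_mod_cast hmn)⟩
      simp only [Ψ, indicator_of_mem hu, indicator_of_mem hu']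
      exact min_le_min le_rfl (by exact_mod_cast Nat.cast_le.2 hmn)
    · simp [Ψ, indicator_of_notMem hu]
  have hΨsup : ∀ u, (⨆ n, Ψ n u) = Φ u := by
    intro u
    refine le_antisymm (iSup_le fun n => hΨle n u) ?_
    obtain ⟨N, hN⟩ := exists_nat_ge |u|
    have humem : ∀ {n : ℕ}, N ≤ n → u ∈ Icc (-(n:ℝ)) n := by
      intro n hn
      have : |u| ≤ (n:ℝ) := le_trans hN (by exact_mod_cast hn)
      exact ⟨neg_le_of_abs_le this, le_of_abs_le this⟩
    by_cases hΦu : Φ u = ⊤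
    · rw [hΦu]
      have : ∀ k : ℕ, (k : ℝ≥0∞) ≤ ⨆ n, Ψ n u := by
        intro k
        refine le_trans ?_ (le_iSup _ (max k N))
        rw [hΨdef]
        simp only [indicator_of_mem (humem (le_max_right k N)), hΦu]
        rw [min_eq_right le_top]
        exact_mod_cast Nat.le_max_left k N
      exact le_trans (le_of_eq ENNReal.iSup_natCast.symm) (iSup_le this)
    · obtain ⟨k, hk⟩ := ENNReal.exists_nat_gt hΦu
      refine le_trans ?_ (le_iSup _ (max k N))
      rw [hΨdef]
      simp only [indicator_of_mem (humem (le_max_right k N))]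
      rw [min_eq_left]
      exact le_trans hk.le (by exact_mod_cast Nat.le_max_left k N)
  -- finite integrals of truncations
  have key : ∀ n : ℕ, (∫⁻ u, Ψ n u ^ q) ^ (1/q) ≤ M := by
    intro n
    set I := ∫⁻ u, Ψ n u ^ q with hI
    have hIlt : I ≠ ⊤ := by
      have hbound : ∀ u, Ψ n u ^ q ≤ (Icc (-(n:ℝ)) n).indicator (fun _ => (n:ℝ≥0∞) ^ q) u := by
        intro u
        by_cases hu : u ∈ Icc (-(n:ℝ)) n
        · simp only [Ψ, indicator_of_mem hu]
          exact ENNReal.rpow_le_rpow (min_le_right _ _) hq0.le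
        · simp [Ψ, indicator_of_notMem hu, ENNReal.zero_rpow_of_pos hq0]
      refine ne_of_lt (lt_of_le_of_lt (lintegral_mono hbound) ?_)
      rw [lintegral_indicator measurableSet_Icc, setLIntegral_const]
      exact ENNReal.mul_lt_top (ENNReal.rpow_lt_top_of_nonneg hq0.le (by simp)) (by simp)
    by_cases hI0 : I = 0
    · rw [hI0, ENNReal.zero_rpow_of_pos (by positivity)]
      exact zero_le
    have step : I ≤ M * I ^ (1/q') := by
      have hxq : ∀ x : ℝ≥0∞, x ^ q = x * x ^ (q - 1) := by
        intro x
        have h2 := ENNReal.rpow_add_of_nonneg (x := x) 1 (q - 1) zero_le_one (by linarith)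
        rw [ENNReal.rpow_one] at h2
        rw [show (1:ℝ) + (q - 1) = q by ring] at h2
        exact h2
      have e1 : I = ∫⁻ u, Ψ n u * Ψ n u ^ (q - 1) := by
        rw [hI]
        congr 1; funext u
        exact hxq (Ψ n u)
      have e2 : ∫⁻ u, Ψ n u * Ψ n u ^ (q - 1) ≤ ∫⁻ u, Φ u * Ψ n u ^ (q - 1) :=
        lintegral_mono fun u => mul_le_mul_left (hΨle n u) _
      have e3 : ∫⁻ u, Φ u * Ψ n u ^ (q - 1) = ∫⁻ u, ∫⁻ s in S, h s u * Ψ n u ^ (q - 1) := by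
        congr 1; funext u
        rw [hΦdef]
        exact (lintegral_mul_const _ (hhu u)).symm
      have e4 : ∫⁻ u, ∫⁻ s in S, h s u * Ψ n u ^ (q - 1)
          = ∫⁻ s in S, ∫⁻ u, h s u * Ψ n u ^ (q - 1) := by
        refine lintegral_lintegral_swap ?_
        exact (hswap.mul (((hΨmeas n).pow_const _).comp measurable_fst)).aemeasurable
      have e5 : ∀ s : ℝ, ∫⁻ u, h s u * Ψ n u ^ (q - 1)
          ≤ (∫⁻ u, h s u ^ q) ^ (1/q) * I ^ (1/q') := by
        intro s
        have := ENNReal.lintegral_mul_le_Lp_mul_Lq volume hqq'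
          (hhs s).aemeasurable ((hΨmeas n).pow_const (q-1)).aemeasurable
        simp only [Pi.mul_apply] at this
        refine le_trans this (le_of_eq ?_)
        have heq : ∫⁻ a, (Ψ n a ^ (q - 1)) ^ q' = I := by
          refine lintegral_congr fun u => ?_
          rw [← ENNReal.rpow_mul, hqq'.sub_one_mul_conj]
        rw [heq]
      have e6 : ∫⁻ s in S, (∫⁻ u, h s u ^ q) ^ (1/q) * I ^ (1/q') = M * I ^ (1/q') := by
        rw [hM]
        refine lintegral_mul_const _ ?_
        exact (Measurable.lintegral_prod_right (f := fun s u => h s u ^ q)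
          (hh.pow_const q)).pow_const _
      calc I = ∫⁻ u, Ψ n u * Ψ n u ^ (q - 1) := e1
        _ ≤ ∫⁻ u, Φ u * Ψ n u ^ (q - 1) := e2
        _ = ∫⁻ u, ∫⁻ s in S, h s u * Ψ n u ^ (q - 1) := e3
        _ = ∫⁻ s in S, ∫⁻ u, h s u * Ψ n u ^ (q - 1) := e4
        _ ≤ ∫⁻ s in S, (∫⁻ u, h s u ^ q) ^ (1/q) * I ^ (1/q') := lintegral_mono e5
        _ = M * I ^ (1/q') := e6
    -- cancel
    have hq'pos : 0 < 1/q' := hqq'.symm.one_div_pos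
    have hc0 : I ^ (1/q') ≠ 0 := by
      simp only [ne_eq, ENNReal.rpow_eq_zero_iff, not_or]
      constructor
      · rintro ⟨h1, _⟩; exact hI0 h1
      · rintro ⟨h1, _⟩; exact hIlt h1
    have hct : I ^ (1/q') ≠ ⊤ := ENNReal.rpow_ne_top_of_nonneg hq'pos.le hIlt
    have hsplit : I ^ (1/q) * I ^ (1/q') = I :=  by
      rw [← ENNReal.rpow_add_of_nonneg _ _ (by positivity) hq'pos.le, one_div, one_div,
        hqq'.inv_add_inv_eq_one, ENNReal.rpow_one]
    rw [← ENNReal.mul_le_mul_iff_left hc0 hct, hsplit]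
    exact step
  -- monotone convergence
  have hmct : ∫⁻ u, Φ u ^ q = ⨆ n, ∫⁻ u, Ψ n u ^ q := by
    rw [← lintegral_iSup (fun n => (hΨmeas n).pow_const q)
      (fun m n hmn u => ENNReal.rpow_le_rpow (hΨmono hmn u) hq0.le)]
    congr 1; funext u
    rw [← hΨsup u, ennreal_rpow_iSup _ hq0]
  rw [hmct, ennreal_rpow_iSup _ (by positivity : (0:ℝ) < 1/q)]
  exact iSup_le key

/-- Bilinear estimate in `L^p((0,T)×ℝ)` for the product of the Duhamel terms
of the right-moving equation `∂ₜu + ∂ₓu = F` and the left-moving equation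
`∂ₜu − ∂ₓu = G`, both with zero initial data. -/
theorem bilinear_estimate_duhamel_times_duhamel
    (p : ℝ≥0∞) (hp : 1 ≤ p) (hp' : p ≠ ⊤)
    (T : ℝ) (hT : 0 < T)
    (F G : ℝ → ℝ → ℂ)
    (hFmeas : Measurable (Function.uncurry F))
    (hGmeas : Measurable (Function.uncurry G))
    (hFint : (∫⁻ s in Ioo (0:ℝ) T, eLpNorm (F s) p volume) < ⊤)
    (hGint : (∫⁻ s in Ioo (0:ℝ) T, eLpNorm (G s) p volume) < ⊤) :
    eLpNorm
        (fun q : ℝ × ℝ =>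
          (∫ s in (0:ℝ)..q.1, F s (q.2 - q.1 + s)) *
          (∫ s in (0:ℝ)..q.1, G s (q.2 + q.1 - s))) p
        ((volume.restrict (Ioo (0:ℝ) T)).prod volume)
      ≤ (1/2 : ℝ≥0∞) ^ (1/p.toReal) *
          (∫⁻ s in Ioo (0:ℝ) T, eLpNorm (F s) p volume) *
          (∫⁻ s in Ioo (0:ℝ) T, eLpNorm (G s) p volume) := by
  have hp0 : p ≠ 0 := fun h => by simp [h] at hp
  set q := p.toReal with hqdef
  have hq1 : 1 ≤ q := by
    have := ENNReal.toReal_mono hp' hp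
    simpa using this
  have hq0 : 0 < q := lt_of_lt_of_le one_pos hq1
  -- the majorants
  set f : ℝ → ℝ≥0∞ := fun u => ∫⁻ s in Ioo (0:ℝ) T, (‖F s (u + s)‖₊ : ℝ≥0∞) with hfdef
  set g : ℝ → ℝ≥0∞ := fun v => ∫⁻ s in Ioo (0:ℝ) T, (‖G s (v - s)‖₊ : ℝ≥0∞) with hgdef
  have hFm2 : Measurable (Function.uncurry fun (u s : ℝ) => (‖F s (u + s)‖₊ : ℝ≥0∞)) := by
    apply Measurable.coe_nnreal_ennreal
    apply Measurable.nnnorm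
    exact hFmeas.comp ((measurable_snd).prodMk (measurable_fst.add measurable_snd))
  have hGm2 : Measurable (Function.uncurry fun (v s : ℝ) => (‖G s (v - s)‖₊ : ℝ≥0∞)) := by
    apply Measurable.coe_nnreal_ennreal
    apply Measurable.nnnorm
    exact hGmeas.comp ((measurable_snd).prodMk (measurable_fst.sub measurable_snd))
  have hFm2' : Measurable (Function.uncurry fun (s u : ℝ) => (‖F s (u + s)‖₊ : ℝ≥0∞)) := by
    apply Measurable.coe_nnreal_ennreal
    apply Measurable.nnnorm
    exact hFmeas.comp (measurable_fst.prodMk (measurable_snd.add measurable_fst))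
  have hGm2' : Measurable (Function.uncurry fun (s v : ℝ) => (‖G s (v - s)‖₊ : ℝ≥0∞)) := by
    apply Measurable.coe_nnreal_ennreal
    apply Measurable.nnnorm
    exact hGmeas.comp (measurable_fst.prodMk (measurable_snd.sub measurable_fst))
  have hf : Measurable f := Measurable.lintegral_prod_right hFm2
  have hg : Measurable g := Measurable.lintegral_prod_right hGm2
  -- pointwise bounds
  have hbF : ∀ t x : ℝ, t ∈ Ioo (0:ℝ) T →
      (‖∫ s in (0:ℝ)..t, F s (x - t + s)‖₊ : ℝ≥0∞) ≤ f (x - t) := by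
    intro t x ht
    rw [intervalIntegral.integral_of_le ht.1.le]
    refine le_trans (enorm_integral_le_lintegral_enorm _) ?_
    exact lintegral_mono_set fun s hs => ⟨hs.1, lt_of_le_of_lt hs.2 ht.2⟩
  have hbG : ∀ t x : ℝ, t ∈ Ioo (0:ℝ) T →
      (‖∫ s in (0:ℝ)..t, G s (x + t - s)‖₊ : ℝ≥0∞) ≤ g (x + t) := by
    intro t x ht
    rw [intervalIntegral.integral_of_le ht.1.le]
    refine le_trans (enorm_integral_le_lintegral_enorm _) ?_
    exact lintegral_mono_set fun s hs => ⟨hs.1, lt_of_le_of_lt hs.2 ht.2⟩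
  set μ := (volume.restrict (Ioo (0:ℝ) T)).prod (volume : Measure ℝ) with hμ
  -- step 1 : bound the eLpNorm integrand
  rw [eLpNorm_eq_lintegral_rpow_enorm_toReal hp0 hp']
  have hmono : (∫⁻ z : ℝ × ℝ, (‖(∫ s in (0:ℝ)..z.1, F s (z.2 - z.1 + s)) *
        (∫ s in (0:ℝ)..z.1, G s (z.2 + z.1 - s))‖₊ : ℝ≥0∞) ^ q ∂μ)
      ≤ ∫⁻ z : ℝ × ℝ, f (z.2 - z.1) ^ q * g (z.2 + z.1) ^ q ∂μ := by
    refine lintegral_mono_ae ?_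
    have hres : μ = ((volume : Measure ℝ).prod (volume : Measure ℝ)).restrict
        ((Ioo (0:ℝ) T) ×ˢ univ) := by
      rw [hμ, ← Measure.prod_restrict, Measure.restrict_univ]
    have hae : ∀ᵐ z : ℝ × ℝ ∂μ, z ∈ (Ioo (0:ℝ) T) ×ˢ (univ : Set ℝ) := by
      rw [hres]
      exact ae_restrict_mem (measurableSet_Ioo.prod MeasurableSet.univ)
    filter_upwards [hae] with z hz
    have hz1 : z.1 ∈ Ioo (0:ℝ) T := hz.1
    rw [nnnorm_mul, ENNReal.coe_mul, ← ENNReal.mul_rpow_of_nonneg _ _ hq0.le]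
    exact ENNReal.rpow_le_rpow (mul_le_mul' (hbF z.1 z.2 hz1) (hbG z.1 z.2 hz1)) hq0.le
  refine le_trans (ENNReal.rpow_le_rpow hmono (by positivity : (0:ℝ) ≤ 1/q)) ?_
  -- step 2 : Tonelli
  have step2 : (∫⁻ z : ℝ × ℝ, f (z.2 - z.1) ^ q * g (z.2 + z.1) ^ q ∂μ)
      = ∫⁻ t in Ioo (0:ℝ) T, ∫⁻ x, f (x - t) ^ q * g (x + t) ^ q := by
    rw [hμ, lintegral_prod]
    exact (((hf.comp (measurable_snd.sub measurable_fst)).pow_const q).mul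
      ((hg.comp (measurable_snd.add measurable_fst)).pow_const q)).aemeasurable
  -- step 3 : translate x by t
  have step3 : ∀ t : ℝ, (∫⁻ x, f (x - t) ^ q * g (x + t) ^ q)
      = ∫⁻ x, f x ^ q * g (x + 2*t) ^ q := by
    intro t
    have := lintegral_add_right_eq_self (μ := volume) (fun x => f (x - t) ^ q * g (x + t) ^ q) t
    rw [← this]
    refine lintegral_congr fun x => ?_
    rw [show x + t - t = x by ring, show x + t + t = x + 2*t by ring]
  -- step 4 : swap
  have step4 : (∫⁻ t in Ioo (0:ℝ) T, ∫⁻ x, f x ^ q * g (x + 2*t) ^ q)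
      = ∫⁻ x, ∫⁻ t in Ioo (0:ℝ) T, f x ^ q * g (x + 2*t) ^ q := by
    refine lintegral_lintegral_swap ?_
    refine Measurable.aemeasurable ?_
    exact ((hf.pow_const q).comp measurable_snd).mul
      (((hg.comp (measurable_snd.add (measurable_fst.const_mul 2))).pow_const q))
  -- step 5-7 : inner bound
  have step5 : ∀ x : ℝ, (∫⁻ t in Ioo (0:ℝ) T, f x ^ q * g (x + 2*t) ^ q)
      ≤ f x ^ q * ((1/2 : ℝ≥0∞) * ∫⁻ v, g v ^ q) := by
    intro x
    have hmeas1 : Measurable fun t : ℝ => g (x + 2*t) ^ q := by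
      have h1 : Measurable fun t : ℝ => x + 2*t := measurable_const.add (measurable_id.const_mul 2)
      exact (hg.comp h1).pow_const q
    rw [lintegral_const_mul _ hmeas1]
    refine mul_le_mul' le_rfl ?_
    have hle : (∫⁻ t in Ioo (0:ℝ) T, g (x + 2*t) ^ q) ≤ ∫⁻ t, g (x + 2*t) ^ q :=
      lintegral_mono' Measure.restrict_le_self le_rfl
    refine le_trans hle (le_of_eq ?_)
    have hmeas2 : Measurable fun y : ℝ => g (x + y) ^ q := by
      have h1 : Measurable fun y : ℝ => x + y := measurable_const.add measurable_id
      exact (hg.comp h1).pow_const q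
    have hmap : (∫⁻ t, g (x + 2*t) ^ q)
        = ∫⁻ y, g (x + y) ^ q ∂(Measure.map (fun t : ℝ => 2*t) volume) :=
      (lintegral_map hmeas2 (measurable_const_mul 2)).symm
    rw [hmap, Real.map_volume_mul_left (two_ne_zero), lintegral_smul_measure,
      lintegral_add_left_eq_self (μ := volume) (fun y => g y ^ q) x]
    congr 1
    rw [abs_of_pos (by norm_num : (0:ℝ) < 2⁻¹), ENNReal.ofReal_inv_of_pos (by norm_num),
      ENNReal.ofReal_ofNat, one_div]
  -- put together
  set A := ∫⁻ u, f u ^ q with hA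
  set B := ∫⁻ v, g v ^ q with hB
  have total : (∫⁻ z : ℝ × ℝ, f (z.2 - z.1) ^ q * g (z.2 + z.1) ^ q ∂μ)
      ≤ (1/2 : ℝ≥0∞) * A * B := by
    rw [step2]
    calc (∫⁻ t in Ioo (0:ℝ) T, ∫⁻ x, f (x - t) ^ q * g (x + t) ^ q)
        = ∫⁻ t in Ioo (0:ℝ) T, ∫⁻ x, f x ^ q * g (x + 2*t) ^ q := by
          refine lintegral_congr fun t => step3 t
      _ = ∫⁻ x, ∫⁻ t in Ioo (0:ℝ) T, f x ^ q * g (x + 2*t) ^ q := step4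
      _ ≤ ∫⁻ x, f x ^ q * ((1/2 : ℝ≥0∞) * B) := lintegral_mono step5
      _ = A * ((1/2 : ℝ≥0∞) * B) := lintegral_mul_const _ (hf.pow_const q)
      _ = (1/2 : ℝ≥0∞) * A * B := by ring
  refine le_trans (ENNReal.rpow_le_rpow total (by positivity : (0:ℝ) ≤ 1/q)) ?_
  rw [ENNReal.mul_rpow_of_nonneg _ _ (by positivity : (0:ℝ) ≤ 1/q),
    ENNReal.mul_rpow_of_nonneg _ _ (by positivity : (0:ℝ) ≤ 1/q)]
  -- Minkowski for each factor
  have hAle : A ^ (1/q) ≤ ∫⁻ s in Ioo (0:ℝ) T, eLpNorm (F s) p volume := by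
    have hm := minkowski_lintegral (S := Ioo (0:ℝ) T)
      (h := fun s u => (‖F s (u + s)‖₊ : ℝ≥0∞)) hq1 hFm2'
    rw [hA, hfdef]
    refine le_trans hm (le_of_eq ?_)
    refine lintegral_congr fun s => ?_
    rw [lintegral_add_right_eq_self (μ := volume) (fun x => (‖F s x‖₊ : ℝ≥0∞) ^ q) s,
      eLpNorm_eq_lintegral_rpow_enorm_toReal hp0 hp']
    rfl
  have hBle : B ^ (1/q) ≤ ∫⁻ s in Ioo (0:ℝ) T, eLpNorm (G s) p volume := by
    have hm := minkowski_lintegral (S := Ioo (0:ℝ) T)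
      (h := fun s v => (‖G s (v - s)‖₊ : ℝ≥0∞)) hq1 hGm2'
    rw [hB, hgdef]
    refine le_trans hm (le_of_eq ?_)
    refine lintegral_congr fun s => ?_
    have : (∫⁻ v, (‖G s (v - s)‖₊ : ℝ≥0∞) ^ q)
        = ∫⁻ x, (‖G s x‖₊ : ℝ≥0∞) ^ q := by
      have h2 := lintegral_add_right_eq_self (μ := volume) (fun x => (‖G s x‖₊ : ℝ≥0∞) ^ q) (-s)
      simp only [← sub_eq_add_neg] at h2
      exact h2
    rw [this, eLpNorm_eq_lintegral_rpow_enorm_toReal hp0 hp']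
    rfl
  exact mul_le_mul' (mul_le_mul' le_rfl hAle) hBle
end

section
/- Let 1 ≤ p < ∞, T > 0, let u₊₀, u₋₀ ∈ L^p(ℝ; ℂ), and let F₊, F₋ : (0,T) × ℝ → ℂ be measurable with ∫₀ᵀ ‖F₊(s,·)‖_{L^p(ℝ)} ds < ∞ and ∫₀ᵀ ‖F₋(s,·)‖_{L^p(ℝ)} ds < ∞. Define u₊(t,x) = u₊₀(x−t) + ∫₀ᵗ F₊(s, x−(t−s)) ds and u₋(t,x) = u₋₀(x+t) + ∫₀ᵗ F₋(s, x+(t−s)) ds. Then (∫₀ᵀ ∫_ℝ |u₊(t,x) u₋(t,x)|^p dx dt)^{1/p} ≤ (1/2)^{1/p} (‖u₊₀‖_{L^p(ℝ)} + ∫₀ᵀ ‖F₊(s,·)‖_{L^p(ℝ)} ds)(‖u₋₀‖_{L^p(ℝ)} + ∫₀ᵀ ‖F₋(s,·)‖_{L^p(ℝ)} ds). -/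
open MeasureTheory Set
open scoped ENNReal NNReal

theorem rpow_iSup_mono {u : ℕ → ℝ≥0∞} (hu : Monotone u) {P : ℝ} (hP : 0 < P) :
    (⨆ n, u n) ^ P = ⨆ n, (u n) ^ P := by
  have h1 : Filter.Tendsto u Filter.atTop (nhds (⨆ n, u n)) := tendsto_atTop_iSup hu
  have h2 : Filter.Tendsto (fun n => (u n) ^ P) Filter.atTop (nhds ((⨆ n, u n) ^ P)) :=
    (ENNReal.continuous_rpow_const.continuousAt).tendsto.comp h1
  have h3 : Filter.Tendsto (fun n => (u n) ^ P) Filter.atTop (nhds (⨆ n, (u n) ^ P)) :=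
    tendsto_atTop_iSup (fun a b hab => ENNReal.rpow_le_rpow (hu hab) hP.le)
  exact tendsto_nhds_unique h2 h3

/-- Minkowski's integral inequality for `ℝ≥0∞`-valued functions. -/
theorem minkowski_lintegral_s5 {α β : Type*} [MeasurableSpace α] [MeasurableSpace β]
    (μ : Measure α) (ν : Measure β) [SigmaFinite μ] [IsFiniteMeasure ν]
    {P : ℝ} (hP : 1 ≤ P) (f : β → α → ℝ≥0∞) (hf : Measurable (Function.uncurry f)) :
    (∫⁻ a, (∫⁻ s, f s a ∂ν) ^ P ∂μ) ^ (1/P) ≤ ∫⁻ s, (∫⁻ a, f s a ^ P ∂μ) ^ (1/P) ∂ν := by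
  have hP0 : 0 < P := lt_of_lt_of_le zero_lt_one hP
  -- measurability of sections
  have hsec1 : ∀ s, Measurable (f s) := fun s =>
    hf.comp measurable_prodMk_left
  have hsec2 : ∀ a, Measurable (fun s => f s a) := fun a =>
    hf.comp measurable_prodMk_right
  rcases eq_or_lt_of_le hP with hP1 | hP1
  · subst hP1
    simp only [ENNReal.rpow_one, one_div_one]
    refine le_of_eq ?_
    exact lintegral_lintegral_swap (hf.comp measurable_swap).aemeasurable
  -- the case `P > 1`, first under a finiteness assumption
  have key : ∀ g : β → α → ℝ≥0∞, Measurable (Function.uncurry g) →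
      (∫⁻ a, (∫⁻ s, g s a ∂ν) ^ P ∂μ) ≠ ⊤ →
      (∫⁻ a, (∫⁻ s, g s a ∂ν) ^ P ∂μ) ^ (1/P) ≤ ∫⁻ s, (∫⁻ a, g s a ^ P ∂μ) ^ (1/P) ∂ν := by
    intro g hg hfin
    have hgsec1 : ∀ s, Measurable (g s) := fun s => hg.comp measurable_prodMk_left
    have hgsec2 : ∀ a, Measurable (fun s => g s a) := fun a =>
      hg.comp measurable_prodMk_right
    set Φ : α → ℝ≥0∞ := fun a => ∫⁻ s, g s a ∂ν with hΦ
    have hΦm : Measurable Φ := Measurable.lintegral_prod_right (hg.comp measurable_swap)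
    set I : ℝ≥0∞ := ∫⁻ a, Φ a ^ P ∂μ with hI
    set J : ℝ≥0∞ := ∫⁻ s, (∫⁻ a, g s a ^ P ∂μ) ^ (1/P) ∂ν with hJ
    rcases eq_or_ne I 0 with hI0 | hI0
    · rw [hI0, ENNReal.zero_rpow_of_pos (by positivity : (0:ℝ) < 1/P)]
      exact bot_le
    have hpq : P.HolderConjugate (P / (P - 1)) := Real.HolderConjugate.conjExponent hP1
    set Q : ℝ := P / (P - 1) with hQ
    have hstep : I ≤ J * I ^ (1/Q) := by
      have e1 : I = ∫⁻ a, Φ a * Φ a ^ (P - 1) ∂μ := by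
        refine lintegral_congr fun a => ?_
        rcases eq_or_ne (Φ a) 0 with h0 | h0
        · rw [h0, ENNReal.zero_rpow_of_pos hP0, zero_mul]
        rcases eq_or_ne (Φ a) ⊤ with htop | htop
        · rw [htop, ENNReal.top_rpow_of_pos hP0, ENNReal.top_rpow_of_pos (by linarith),
            ENNReal.top_mul_top]
        · calc Φ a ^ P = Φ a ^ (1 + (P - 1)) := by ring_nf
            _ = Φ a ^ (1:ℝ) * Φ a ^ (P - 1) := ENNReal.rpow_add _ _ h0 htop
            _ = Φ a * Φ a ^ (P - 1) := by rw [ENNReal.rpow_one]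
      have e2 : I = ∫⁻ s, ∫⁻ a, g s a * Φ a ^ (P - 1) ∂μ ∂ν := by
        rw [e1]
        have : ∀ a, Φ a * Φ a ^ (P - 1) = ∫⁻ s, g s a * Φ a ^ (P - 1) ∂ν := fun a => by
          rw [lintegral_mul_const _ (hgsec2 a)]
        simp_rw [this]
        exact lintegral_lintegral_swap
          ((hg.comp measurable_swap).mul ((hΦm.comp measurable_fst).pow_const _)).aemeasurable
      nth_rewrite 1 [e2]
      calc ∫⁻ s, ∫⁻ a, g s a * Φ a ^ (P - 1) ∂μ ∂ν
          ≤ ∫⁻ s, (∫⁻ a, g s a ^ P ∂μ) ^ (1/P) * (∫⁻ a, (Φ a ^ (P-1)) ^ Q ∂μ) ^ (1/Q) ∂ν := by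
            refine lintegral_mono fun s => ?_
            exact ENNReal.lintegral_mul_le_Lp_mul_Lq μ hpq (hgsec1 s).aemeasurable
              ((hΦm.pow_const _).aemeasurable)
        _ = J * I ^ (1/Q) := by
            have h1 : P - 1 ≠ 0 := sub_ne_zero.mpr hP1.ne'
            have hexp : ∀ a : α, (Φ a ^ (P-1)) ^ Q = Φ a ^ P := fun a => by
              rw [← ENNReal.rpow_mul]
              congr 1
              rw [hQ, mul_comm, div_mul_cancel₀ _ h1]
            have hmg : Measurable (Function.uncurry fun s a => g s a ^ P) := hg.pow_const P
            have hmA : Measurable fun s => (∫⁻ a, g s a ^ P ∂μ) ^ (1/P) :=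
              (Measurable.lintegral_prod_right hmg).pow_const _
            simp_rw [hexp]
            rw [← hI, lintegral_mul_const _ hmA, hJ]
    -- conclude
    have hQpos : 0 < Q := hpq.symm.pos
    have hIQ_ne_top : I ^ (1/Q) ≠ ⊤ :=
      ENNReal.rpow_ne_top_of_nonneg (by positivity) hfin
    have hIQ_ne_zero : I ^ (1/Q) ≠ 0 := by
      simp only [ne_eq, ENNReal.rpow_eq_zero_iff, not_or]
      constructor
      · rintro ⟨h, -⟩; exact hI0 h
      · rintro ⟨h, -⟩; exact hfin h
    have hsum : 1/P + 1/Q = 1 := by rw [one_div, one_div]; exact hpq.inv_add_inv_eq_one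
    have hsplit : I = I ^ (1/P) * I ^ (1/Q) := by
      rw [← ENNReal.rpow_add _ _ hI0 hfin, hsum, ENNReal.rpow_one]
    nth_rewrite 1 [hsplit] at hstep
    exact (ENNReal.mul_le_mul_iff_left hIQ_ne_zero hIQ_ne_top).mp hstep
  -- truncation
  have hP0' : P ≠ 0 := hP0.ne'
  set S : ℕ → Set α := spanningSets μ with hS
  set g : ℕ → β → α → ℝ≥0∞ := fun n s a => min (f s a) n * (S n).indicator 1 a with hgdef
  have hgm : ∀ n, Measurable (Function.uncurry (g n)) := fun n =>
    (hf.min measurable_const).mul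
      ((measurable_one.indicator (measurableSet_spanningSets μ n)).comp measurable_snd)
  have hgle : ∀ n s a, g n s a ≤ f s a := by
    intro n s a
    calc min (f s a) n * (S n).indicator 1 a ≤ f s a * 1 := by
          refine mul_le_mul' (min_le_left _ _) ?_
          by_cases h : a ∈ S n <;> simp [h]
      _ = f s a := mul_one _
  have hgmono : ∀ s a, Monotone fun n => g n s a := by
    intro s a n m hnm
    refine mul_le_mul' (min_le_min le_rfl (by exact_mod_cast Nat.cast_le.mpr hnm)) ?_
    exact Set.indicator_le_indicator_of_subset (monotone_spanningSets μ hnm) (by simp) a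
  set Φ : α → ℝ≥0∞ := fun a => ∫⁻ s, f s a ∂ν with hΦ
  set Φn : ℕ → α → ℝ≥0∞ := fun n a => ∫⁻ s, g n s a ∂ν with hΦn
  have hΦnm : ∀ n, Measurable (Φn n) := fun n =>
    Measurable.lintegral_prod_right ((hgm n).comp measurable_swap)
  have hΦnmono : Monotone Φn := fun n m hnm a => lintegral_mono fun s => hgmono s a hnm
  -- pointwise convergence of Φn to Φ
  have hΦsup : ∀ a, (⨆ n, Φn n a) = Φ a := by
    intro a
    obtain ⟨N, hN⟩ : ∃ N, a ∈ S N := by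
      have h1 := iUnion_spanningSets μ
      have h2 : a ∈ ⋃ n, S n := by rw [hS, h1]; trivial
      exact mem_iUnion.mp h2
    have hmem : ∀ n : ℕ, a ∈ S (max n N) := fun n =>
      monotone_spanningSets μ (le_max_right n N) hN
    have e1 : (⨆ n, Φn n a) = ⨆ n : ℕ, ∫⁻ s, min (f s a) (n:ℝ≥0∞) ∂ν := by
      apply le_antisymm
      · refine iSup_le fun n => le_trans (lintegral_mono fun s => ?_) (le_iSup
          (fun n : ℕ => ∫⁻ s, min (f s a) (n:ℝ≥0∞) ∂ν) n)
        calc min (f s a) n * (S n).indicator 1 a ≤ min (f s a) n * 1 := by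
              refine mul_le_mul' le_rfl ?_
              by_cases h : a ∈ S n <;> simp [h]
          _ = min (f s a) n := mul_one _
      · refine iSup_le fun n => le_trans ?_ (le_iSup (fun n => Φn n a) (max n N))
        refine lintegral_mono fun s => ?_
        show min (f s a) (n:ℝ≥0∞) ≤ min (f s a) ((max n N : ℕ):ℝ≥0∞) * (S (max n N)).indicator 1 a
        rw [Set.indicator_of_mem (hmem n), Pi.one_apply, mul_one]
        exact min_le_min le_rfl (Nat.cast_le.mpr (le_max_left n N))
    have e2 : (⨆ n : ℕ, ∫⁻ s, min (f s a) (n:ℝ≥0∞) ∂ν)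
        = ∫⁻ s, ⨆ n : ℕ, min (f s a) (n:ℝ≥0∞) ∂ν :=
      (lintegral_iSup (fun n => (hsec2 a).min measurable_const)
        (fun n m hnm s => min_le_min le_rfl (Nat.cast_le.mpr hnm))).symm
    have e3 : ∀ s, (⨆ n : ℕ, min (f s a) (n:ℝ≥0∞)) = f s a := by
      intro s
      apply le_antisymm (iSup_le fun n => min_le_left _ _)
      rcases eq_or_ne (f s a) ⊤ with htop | htop
      · rw [htop]
        have h4 : (⨆ n : ℕ, min (⊤:ℝ≥0∞) (n:ℝ≥0∞)) = ⨆ n : ℕ, (n:ℝ≥0∞) :=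
          iSup_congr fun n => min_eq_right le_top
        rw [h4, ENNReal.iSup_natCast]
      · obtain ⟨n, hn⟩ := ENNReal.exists_nat_gt htop
        exact le_trans (le_of_eq (min_eq_left hn.le).symm)
          (le_iSup (fun n : ℕ => min (f s a) (n:ℝ≥0∞)) n)
    rw [e1, e2]
    exact lintegral_congr e3
  -- each truncated integral is finite
  have hfin : ∀ n, (∫⁻ a, Φn n a ^ P ∂μ) ≠ ⊤ := by
    intro n
    have hb : ∀ a, Φn n a ^ P ≤ (S n).indicator
        (fun _ => (((n:ℝ≥0∞) * ν univ) ^ P)) a := by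
      intro a
      by_cases h : a ∈ S n
      · rw [Set.indicator_of_mem h]
        refine ENNReal.rpow_le_rpow ?_ hP0.le
        calc Φn n a ≤ ∫⁻ _, (n:ℝ≥0∞) ∂ν := lintegral_mono fun s => by
              calc min (f s a) n * (S n).indicator 1 a ≤ (n:ℝ≥0∞) * 1 := by
                    refine mul_le_mul' (min_le_right _ _) ?_
                    by_cases h' : a ∈ S n <;> simp [h']
                _ = n := mul_one _
          _ = (n:ℝ≥0∞) * ν univ := lintegral_const _
      · rw [Set.indicator_of_notMem h]
        have : Φn n a = 0 := by
          rw [hΦn]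
          simp only []
          rw [← lintegral_zero (μ := ν)]
          refine lintegral_congr fun s => ?_
          rw [hgdef]
          simp [Set.indicator_of_notMem h]
        rw [this, ENNReal.zero_rpow_of_pos hP0]
    refine ne_top_of_le_ne_top ?_ (lintegral_mono hb)
    rw [lintegral_indicator_const (measurableSet_spanningSets μ n)]
    exact ENNReal.mul_ne_top
      (ENNReal.rpow_ne_top_of_nonneg hP0.le
        (ENNReal.mul_ne_top (ENNReal.natCast_ne_top n) (measure_ne_top ν univ)))
      (measure_spanningSets_lt_top μ n).ne
  -- limit
  have hIsup : (∫⁻ a, Φ a ^ P ∂μ) = ⨆ n, ∫⁻ a, Φn n a ^ P ∂μ := by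
    rw [← lintegral_iSup (fun n => (hΦnm n).pow_const P)
      (fun n m hnm a => ENNReal.rpow_le_rpow (hΦnmono hnm a) hP0.le)]
    refine lintegral_congr fun a => ?_
    rw [← rpow_iSup_mono (fun n m hnm => hΦnmono hnm a) hP0, hΦsup a]
  set J : ℝ≥0∞ := ∫⁻ s, (∫⁻ a, f s a ^ P ∂μ) ^ (1/P) ∂ν with hJdef
  have hJn : ∀ n, (∫⁻ a, Φn n a ^ P ∂μ) ^ (1/P) ≤ J := by
    intro n
    refine le_trans (key (g n) (hgm n) (hfin n)) ?_
    refine lintegral_mono fun s => ?_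
    refine ENNReal.rpow_le_rpow (lintegral_mono fun a => ?_) (by positivity)
    exact ENNReal.rpow_le_rpow (hgle n s a) hP0.le
  have hInJ : ∀ n, (∫⁻ a, Φn n a ^ P ∂μ) ≤ J ^ P := by
    intro n
    have := ENNReal.rpow_le_rpow (hJn n) hP0.le
    rwa [← ENNReal.rpow_mul, one_div, inv_mul_cancel₀ hP0', ENNReal.rpow_one] at this
  have hIJ : (∫⁻ a, Φ a ^ P ∂μ) ≤ J ^ P := by
    rw [hIsup]; exact iSup_le hInJ
  calc (∫⁻ a, (∫⁻ s, f s a ∂ν) ^ P ∂μ) ^ (1/P) = (∫⁻ a, Φ a ^ P ∂μ) ^ (1/P) := rfl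
    _ ≤ (J ^ P) ^ (1/P) := ENNReal.rpow_le_rpow hIJ (by positivity)
    _ = J := by rw [← ENNReal.rpow_mul, mul_one_div, div_self hP0', ENNReal.rpow_one]

theorem null_slice (c : ℝ) {N : Set ℝ} (hN : volume N = 0) (S : Set ℝ) :
    ((volume.restrict S).prod volume) {z : ℝ × ℝ | z.2 + c * z.1 ∈ N} = 0 := by
  obtain ⟨N', hNN', hN'm, hN'0⟩ := exists_measurable_superset_of_null hN
  have hsub : {z : ℝ × ℝ | z.2 + c * z.1 ∈ N} ⊆ {z : ℝ × ℝ | z.2 + c * z.1 ∈ N'} :=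
    fun z hz => hNN' hz
  refine measure_mono_null hsub ?_
  have hmf : Measurable fun z : ℝ × ℝ => z.2 + c * z.1 :=
    measurable_snd.add (measurable_fst.const_mul c)
  rw [Measure.prod_apply (show MeasurableSet {z : ℝ × ℝ | z.2 + c * z.1 ∈ N'} from hmf hN'm)]
  have h0 : ∀ t : ℝ, volume (Prod.mk t ⁻¹' {z : ℝ × ℝ | z.2 + c * z.1 ∈ N'}) = 0 := by
    intro t
    have he : Prod.mk t ⁻¹' {z : ℝ × ℝ | z.2 + c * z.1 ∈ N'}
        = (fun x : ℝ => x + c * t) ⁻¹' N' := rfl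
    rw [he, measure_preimage_add_right volume (c * t) N']
    exact hN'0
  have h0' : ∀ t : ℝ, volume {a : ℝ | a + c * t ∈ N'} = 0 := h0
  simp [h0']

/-- Bilinear estimate for the Duhamel (mild) solutions `u₊` of
`∂ₜu₊ + ∂ₓu₊ = F₊`, `u₊(0) = u₊₀`, and `u₋` of `∂ₜu₋ − ∂ₓu₋ = F₋`,
`u₋(0) = u₋₀`: the `L^p` norm of `u₊u₋` over `(0,T)×ℝ` is bounded by
`(1/2)^{1/p}(‖u₊₀‖_p + ∫₀ᵀ‖F₊(s)‖_p ds)(‖u₋₀‖_p + ∫₀ᵀ‖F₋(s)‖_p ds)`. -/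
theorem bilinear_estimate_mild_solutions
    (p : ℝ≥0∞) (hp : 1 ≤ p) (hp' : p ≠ ⊤)
    (T : ℝ) (hT : 0 < T)
    (up0 um0 : ℝ → ℂ)
    (hup0 : MemLp up0 p volume) (hum0 : MemLp um0 p volume)
    (Fp Fm : ℝ → ℝ → ℂ)
    (hFpmeas : Measurable (Function.uncurry Fp))
    (hFmmeas : Measurable (Function.uncurry Fm))
    (hFpint : (∫⁻ s in Ioo (0:ℝ) T, eLpNorm (Fp s) p volume) < ⊤)
    (hFmint : (∫⁻ s in Ioo (0:ℝ) T, eLpNorm (Fm s) p volume) < ⊤)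
    (up um : ℝ → ℝ → ℂ)
    (hup : ∀ t x : ℝ, up t x = up0 (x - t) + (∫ s in (0:ℝ)..t, Fp s (x - (t - s))))
    (hum : ∀ t x : ℝ, um t x = um0 (x + t) + (∫ s in (0:ℝ)..t, Fm s (x + (t - s)))) :
    eLpNorm (fun q : ℝ × ℝ => up q.1 q.2 * um q.1 q.2) p
        ((volume.restrict (Ioo (0:ℝ) T)).prod volume)
      ≤ (1/2 : ℝ≥0∞) ^ (1/p.toReal) *
          (eLpNorm up0 p volume + (∫⁻ s in Ioo (0:ℝ) T, eLpNorm (Fp s) p volume)) *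
          (eLpNorm um0 p volume + (∫⁻ s in Ioo (0:ℝ) T, eLpNorm (Fm s) p volume)) := by
  have hp0 : p ≠ 0 := (lt_of_lt_of_le zero_lt_one hp).ne'
  set P : ℝ := p.toReal with hPdef
  have hP1 : 1 ≤ P := by
    rw [hPdef, ← ENNReal.toReal_one]
    exact ENNReal.toReal_mono hp' hp
  have hP0 : 0 < P := lt_of_lt_of_le zero_lt_one hP1
  -- measurable representatives
  set up0' : ℝ → ℂ := hup0.1.mk up0 with hup0'def
  set um0' : ℝ → ℂ := hum0.1.mk um0 with hum0'def
  have hup0'm : Measurable up0' := hup0.1.stronglyMeasurable_mk.measurable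
  have hum0'm : Measurable um0' := hum0.1.stronglyMeasurable_mk.measurable
  have hup0ae : up0 =ᵐ[volume] up0' := hup0.1.ae_eq_mk
  have hum0ae : um0 =ᵐ[volume] um0' := hum0.1.ae_eq_mk
  -- Duhamel majorants
  set ν : Measure ℝ := volume.restrict (Ioo (0:ℝ) T) with hνdef
  haveI hνfin : IsFiniteMeasure ν := by
    constructor
    rw [hνdef, Measure.restrict_apply_univ, Real.volume_Ioo]
    exact ENNReal.ofReal_lt_top
  set dp : ℝ → ℝ≥0∞ := fun a => ∫⁻ s, (‖Fp s (a + s)‖₊ : ℝ≥0∞) ∂ν with hdpdef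
  set dm : ℝ → ℝ≥0∞ := fun b => ∫⁻ s, (‖Fm s (b - s)‖₊ : ℝ≥0∞) ∂ν with hdmdef
  have hdpm : Measurable dp := by
    refine Measurable.lintegral_prod_right (f := fun a s => (‖Fp s (a + s)‖₊ : ℝ≥0∞)) ?_
    exact (hFpmeas.comp (measurable_snd.prodMk (measurable_fst.add measurable_snd))).enorm
  have hdmm : Measurable dm := by
    refine Measurable.lintegral_prod_right (f := fun b s => (‖Fm s (b - s)‖₊ : ℝ≥0∞)) ?_
    exact (hFmmeas.comp (measurable_snd.prodMk (measurable_fst.sub measurable_snd))).enorm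
  set gp : ℝ → ℝ≥0∞ := fun a => (‖up0' a‖₊ : ℝ≥0∞) + dp a with hgpdef
  set gm : ℝ → ℝ≥0∞ := fun b => (‖um0' b‖₊ : ℝ≥0∞) + dm b with hgmdef
  have hgpm : Measurable gp := hup0'm.enorm.add hdpm
  have hgmm : Measurable gm := hum0'm.enorm.add hdmm
  -- pointwise bounds
  have key1 : ∀ t ∈ Ioo (0:ℝ) T, ∀ x : ℝ, up0 (x - t) = up0' (x - t) →
      (‖up t x‖₊ : ℝ≥0∞) ≤ gp (x - t) := by
    intro t ht x hx
    have h1 : (‖up t x‖₊ : ℝ≥0∞) ≤ (‖up0 (x - t)‖₊ : ℝ≥0∞)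
        + (‖∫ s in (0:ℝ)..t, Fp s (x - (t - s))‖₊ : ℝ≥0∞) := by
      rw [hup t x]
      exact_mod_cast nnnorm_add_le _ _
    have h2 : (‖∫ s in (0:ℝ)..t, Fp s (x - (t - s))‖₊ : ℝ≥0∞) ≤ dp (x - t) := by
      rw [intervalIntegral.integral_of_le ht.1.le]
      refine le_trans (enorm_integral_le_lintegral_enorm _) ?_
      have hsub : Ioc (0:ℝ) t ⊆ Ioo (0:ℝ) T := fun s hs => ⟨hs.1, lt_of_le_of_lt hs.2 ht.2⟩
      refine le_trans (lintegral_mono_set hsub) (le_of_eq ?_)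
      rw [hdpdef]
      refine lintegral_congr fun s => ?_
      congr 2
      ring_nf
    calc (‖up t x‖₊ : ℝ≥0∞) ≤ (‖up0 (x - t)‖₊ : ℝ≥0∞) + dp (x - t) :=
          le_trans h1 (add_le_add le_rfl h2)
      _ = gp (x - t) := by rw [hx, hgpdef]
  have key2 : ∀ t ∈ Ioo (0:ℝ) T, ∀ x : ℝ, um0 (x + t) = um0' (x + t) →
      (‖um t x‖₊ : ℝ≥0∞) ≤ gm (x + t) := by
    intro t ht x hx
    have h1 : (‖um t x‖₊ : ℝ≥0∞) ≤ (‖um0 (x + t)‖₊ : ℝ≥0∞)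
        + (‖∫ s in (0:ℝ)..t, Fm s (x + (t - s))‖₊ : ℝ≥0∞) := by
      rw [hum t x]
      exact_mod_cast nnnorm_add_le _ _
    have h2 : (‖∫ s in (0:ℝ)..t, Fm s (x + (t - s))‖₊ : ℝ≥0∞) ≤ dm (x + t) := by
      rw [intervalIntegral.integral_of_le ht.1.le]
      refine le_trans (enorm_integral_le_lintegral_enorm _) ?_
      have hsub : Ioc (0:ℝ) t ⊆ Ioo (0:ℝ) T := fun s hs => ⟨hs.1, lt_of_le_of_lt hs.2 ht.2⟩
      refine le_trans (lintegral_mono_set hsub) (le_of_eq ?_)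
      rw [hdmdef]
      refine lintegral_congr fun s => ?_
      congr 2
      ring_nf
    calc (‖um t x‖₊ : ℝ≥0∞) ≤ (‖um0 (x + t)‖₊ : ℝ≥0∞) + dm (x + t) :=
          le_trans h1 (add_le_add le_rfl h2)
      _ = gm (x + t) := by rw [hx, hgmdef]
  -- the product measure
  set M : Measure (ℝ × ℝ) := (volume.restrict (Ioo (0:ℝ) T)).prod volume with hMdef
  -- a.e. bound on the product
  have hae : ∀ᵐ z ∂M, (‖up z.1 z.2 * um z.1 z.2‖₊ : ℝ≥0∞) ^ P
      ≤ gp (z.2 - z.1) ^ P * gm (z.2 + z.1) ^ P := by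
    have e1 : ∀ᵐ z ∂M, z.1 ∈ Ioo (0:ℝ) T := by
      rw [ae_iff]
      refine measure_mono_null (fun z hz => ?_ : {z : ℝ × ℝ | z.1 ∉ Ioo (0:ℝ) T}
        ⊆ (Ioo (0:ℝ) T)ᶜ ×ˢ univ) ?_
      · exact ⟨hz, trivial⟩
      · rw [hMdef, Measure.prod_prod, Measure.restrict_apply measurableSet_Ioo.compl,
          compl_inter_self, measure_empty, zero_mul]
    have hNp : volume {a : ℝ | ¬ (up0 a = up0' a)} = 0 := ae_iff.mp hup0ae
    have hNm : volume {b : ℝ | ¬ (um0 b = um0' b)} = 0 := ae_iff.mp hum0ae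
    have e2 : ∀ᵐ z ∂M, up0 (z.2 - z.1) = up0' (z.2 - z.1) := by
      rw [ae_iff]
      have h := null_slice (-1) hNp (Ioo (0:ℝ) T)
      refine measure_mono_null (fun z hz => ?_) h
      show z.2 + (-1) * z.1 ∈ {a : ℝ | ¬ (up0 a = up0' a)}
      have : z.2 + (-1) * z.1 = z.2 - z.1 := by ring
      rw [this]
      exact hz
    have e3 : ∀ᵐ z ∂M, um0 (z.2 + z.1) = um0' (z.2 + z.1) := by
      rw [ae_iff]
      have h := null_slice 1 hNm (Ioo (0:ℝ) T)
      refine measure_mono_null (fun z hz => ?_) h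
      show z.2 + 1 * z.1 ∈ {b : ℝ | ¬ (um0 b = um0' b)}
      have : z.2 + 1 * z.1 = z.2 + z.1 := by ring
      rw [this]
      exact hz
    filter_upwards [e1, e2, e3] with z hz1 hz2 hz3
    have hb : (‖up z.1 z.2 * um z.1 z.2‖₊ : ℝ≥0∞) ≤ gp (z.2 - z.1) * gm (z.2 + z.1) := by
      rw [nnnorm_mul, ENNReal.coe_mul]
      exact mul_le_mul' (key1 z.1 hz1 z.2 hz2) (key2 z.1 hz1 z.2 hz3)
    calc (‖up z.1 z.2 * um z.1 z.2‖₊ : ℝ≥0∞) ^ P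
        ≤ (gp (z.2 - z.1) * gm (z.2 + z.1)) ^ P := ENNReal.rpow_le_rpow hb hP0.le
      _ = gp (z.2 - z.1) ^ P * gm (z.2 + z.1) ^ P := ENNReal.mul_rpow_of_nonneg _ _ hP0.le
  -- the main integral bound
  set Ip : ℝ≥0∞ := ∫⁻ a, gp a ^ P ∂volume with hIpdef
  set Im : ℝ≥0∞ := ∫⁻ b, gm b ^ P ∂volume with hImdef
  have hmain : (∫⁻ z, (‖up z.1 z.2 * um z.1 z.2‖₊ : ℝ≥0∞) ^ P ∂M)
      ≤ (1/2 : ℝ≥0∞) * Ip * Im := by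
    have hHm : Measurable fun z : ℝ × ℝ => gp (z.2 - z.1) ^ P * gm (z.2 + z.1) ^ P :=
      ((hgpm.comp (measurable_snd.sub measurable_fst)).pow_const P).mul
        ((hgmm.comp (measurable_snd.add measurable_fst)).pow_const P)
    refine le_trans (lintegral_mono_ae hae) ?_
    rw [hMdef, lintegral_prod _ hHm.aemeasurable]
    -- translate in x for each fixed t
    have hstep1 : ∀ t : ℝ, (∫⁻ x, gp (x - t) ^ P * gm (x + t) ^ P ∂volume)
        = ∫⁻ a, gp a ^ P * gm (a + 2*t) ^ P ∂volume := by
      intro t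
      have h := lintegral_add_right_eq_self (μ := volume)
        (fun x => gp (x - t) ^ P * gm (x + t) ^ P) t
      rw [← h]
      refine lintegral_congr fun a => ?_
      have h1 : a + t - t = a := by ring
      have h2 : a + t + t = a + 2*t := by ring
      rw [h1, h2]
    simp_rw [hstep1]
    -- swap the integrals
    have hswapm : Measurable fun z : ℝ × ℝ => gp z.2 ^ P * gm (z.2 + 2*z.1) ^ P :=
      ((hgpm.comp measurable_snd).pow_const P).mul
        ((hgmm.comp (measurable_snd.add (measurable_fst.const_mul 2))).pow_const P)
    have hswapm' : Measurable fun z : ℝ × ℝ => gp z.2 ^ P * gm (z.2 + 2*z.1) ^ P := by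
      have : (fun z : ℝ × ℝ => gp z.2 ^ P * gm (z.2 + 2*z.1) ^ P)
          = fun z : ℝ × ℝ => gp z.2 ^ P * gm (z.2 + 2*z.1) ^ P := rfl
      exact hswapm
    rw [lintegral_lintegral_swap hswapm.aemeasurable]
    -- inner bound and scaling
    have hinner : ∀ a : ℝ, (∫⁻ t, gm (a + 2*t) ^ P ∂ν) ≤ (1/2 : ℝ≥0∞) * Im := by
      intro a
      refine le_trans (setLIntegral_le_lintegral _ _) (le_of_eq ?_)
      have hk : Measurable fun u : ℝ => gm (a + u) ^ P :=
        (hgmm.comp (measurable_const.add measurable_id)).pow_const P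
      have hmap : ∫⁻ u, gm (a + u) ^ P ∂(Measure.map (fun t : ℝ => 2 * t) volume)
          = ∫⁻ t, gm (a + 2*t) ^ P ∂volume :=
        lintegral_map hk (measurable_id.const_mul 2)
      rw [← hmap, Real.map_volume_mul_left (two_ne_zero), lintegral_smul_measure]
      have htrans : ∫⁻ u, gm (a + u) ^ P ∂volume = Im := by
        rw [hImdef, ← lintegral_add_left_eq_self (fun b => gm b ^ P) a]
      rw [htrans]
      congr 1
      rw [abs_of_pos (by norm_num : (0:ℝ) < 2⁻¹)]
      rw [ENNReal.ofReal_inv_of_pos (by norm_num : (0:ℝ) < 2), one_div]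
      norm_num
    calc ∫⁻ a, ∫⁻ t, gp a ^ P * gm (a + 2*t) ^ P ∂ν ∂volume
        = ∫⁻ a, gp a ^ P * ∫⁻ t, gm (a + 2*t) ^ P ∂ν ∂volume := by
          refine lintegral_congr fun a => ?_
          exact lintegral_const_mul _ ((hgmm.comp (measurable_const.add
            (measurable_id.const_mul 2))).pow_const P)
      _ ≤ ∫⁻ a, gp a ^ P * ((1/2 : ℝ≥0∞) * Im) ∂volume := by
          refine lintegral_mono fun a => mul_le_mul' le_rfl (hinner a)
      _ = (1/2 : ℝ≥0∞) * Ip * Im := by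
          rw [lintegral_mul_const _ (hgpm.pow_const P)]
          ring
  -- Minkowski for the plus part
  have hIp : Ip ^ (1/P) ≤ eLpNorm up0 p volume + ∫⁻ s, eLpNorm (Fp s) p volume ∂ν := by
    have hadd := ENNReal.lintegral_Lp_add_le (μ := volume)
      (f := fun a => (‖up0' a‖₊ : ℝ≥0∞)) (g := dp) hup0'm.enorm.aemeasurable
      hdpm.aemeasurable hP1
    have h1 : (∫⁻ a, (‖up0' a‖₊ : ℝ≥0∞) ^ P ∂volume) ^ (1/P) = eLpNorm up0 p volume := by
      rw [eLpNorm_congr_ae hup0ae, eLpNorm_eq_lintegral_rpow_enorm_toReal hp0 hp']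
      rfl
    have h2 : (∫⁻ a, dp a ^ P ∂volume) ^ (1/P) ≤ ∫⁻ s, eLpNorm (Fp s) p volume ∂ν := by
      have hm' : Measurable (Function.uncurry fun s a => (‖Fp s (a + s)‖₊ : ℝ≥0∞)) :=
        (hFpmeas.comp (measurable_fst.prodMk (measurable_snd.add measurable_fst))).enorm
      refine le_trans (minkowski_lintegral_s5 volume ν hP1 _ hm')
        (le_of_eq (lintegral_congr fun s => ?_))
      have htr : (∫⁻ a, (‖Fp s (a + s)‖₊:ℝ≥0∞) ^ P ∂volume)
          = ∫⁻ a, (‖Fp s a‖₊:ℝ≥0∞) ^ P ∂volume :=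
        lintegral_add_right_eq_self (fun a => (‖Fp s a‖₊:ℝ≥0∞) ^ P) s
      rw [htr, eLpNorm_eq_lintegral_rpow_enorm_toReal hp0 hp']
      rfl
    calc Ip ^ (1/P) ≤ (∫⁻ a, (‖up0' a‖₊:ℝ≥0∞) ^ P ∂volume) ^ (1/P)
          + (∫⁻ a, dp a ^ P ∂volume) ^ (1/P) := hadd
      _ ≤ _ := add_le_add (le_of_eq h1) h2
  -- Minkowski for the minus part
  have hIm : Im ^ (1/P) ≤ eLpNorm um0 p volume + ∫⁻ s, eLpNorm (Fm s) p volume ∂ν := by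
    have hadd := ENNReal.lintegral_Lp_add_le (μ := volume)
      (f := fun b => (‖um0' b‖₊ : ℝ≥0∞)) (g := dm) hum0'm.enorm.aemeasurable
      hdmm.aemeasurable hP1
    have h1 : (∫⁻ b, (‖um0' b‖₊ : ℝ≥0∞) ^ P ∂volume) ^ (1/P) = eLpNorm um0 p volume := by
      rw [eLpNorm_congr_ae hum0ae, eLpNorm_eq_lintegral_rpow_enorm_toReal hp0 hp']
      rfl
    have h2 : (∫⁻ b, dm b ^ P ∂volume) ^ (1/P) ≤ ∫⁻ s, eLpNorm (Fm s) p volume ∂ν := by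
      have hm' : Measurable (Function.uncurry fun s b => (‖Fm s (b - s)‖₊ : ℝ≥0∞)) :=
        (hFmmeas.comp (measurable_fst.prodMk (measurable_snd.sub measurable_fst))).enorm
      refine le_trans (minkowski_lintegral_s5 volume ν hP1 _ hm')
        (le_of_eq (lintegral_congr fun s => ?_))
      have heq : (fun b => (‖Fm s (b - s)‖₊:ℝ≥0∞) ^ P)
          = fun b => (‖Fm s (b + (-s))‖₊:ℝ≥0∞) ^ P := by
        funext b; rw [sub_eq_add_neg]
      have htr : (∫⁻ b, (‖Fm s (b - s)‖₊:ℝ≥0∞) ^ P ∂volume)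
          = ∫⁻ b, (‖Fm s b‖₊:ℝ≥0∞) ^ P ∂volume := by
        rw [heq]
        exact lintegral_add_right_eq_self (fun b => (‖Fm s b‖₊:ℝ≥0∞) ^ P) (-s)
      rw [htr, eLpNorm_eq_lintegral_rpow_enorm_toReal hp0 hp']
      rfl
    calc Im ^ (1/P) ≤ (∫⁻ b, (‖um0' b‖₊:ℝ≥0∞) ^ P ∂volume) ^ (1/P)
          + (∫⁻ b, dm b ^ P ∂volume) ^ (1/P) := hadd
      _ ≤ _ := add_le_add (le_of_eq h1) h2
  -- conclusion
  rw [eLpNorm_eq_lintegral_rpow_enorm_toReal hp0 hp']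
  calc (∫⁻ z, (‖up z.1 z.2 * um z.1 z.2‖₊ : ℝ≥0∞) ^ P ∂M) ^ (1/P)
      ≤ ((1/2 : ℝ≥0∞) * Ip * Im) ^ (1/P) := ENNReal.rpow_le_rpow hmain (by positivity)
    _ = (1/2 : ℝ≥0∞) ^ (1/P) * Ip ^ (1/P) * Im ^ (1/P) := by
        rw [ENNReal.mul_rpow_of_nonneg _ _ (by positivity : (0:ℝ) ≤ 1/P),
          ENNReal.mul_rpow_of_nonneg _ _ (by positivity : (0:ℝ) ≤ 1/P)]
    _ ≤ (1/2 : ℝ≥0∞) ^ (1/P) *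
          (eLpNorm up0 p volume + ∫⁻ s, eLpNorm (Fp s) p volume ∂ν) *
          (eLpNorm um0 p volume + ∫⁻ s, eLpNorm (Fm s) p volume ∂ν) :=
        mul_le_mul' (mul_le_mul' le_rfl hIp) hIm
end

section
/- Let 1 ≤ p < ∞, x₀ ∈ ℝ, R > 0 and 0 < T ≤ R. Let Ω_R(x₀) = {(t,x) ∈ ℝ² : 0 ≤ t ≤ R, |x − x₀| ≤ R − t} and I_R(x₀) = {x ∈ ℝ : |x − x₀| ≤ R}. Let u₊₀, u₋₀ ∈ L^p(ℝ; ℂ) and let F₊, F₋ : (0,T) × ℝ → ℂ be measurable, and define u₊(t,x) = u₊₀(x−t) + ∫₀ᵗ F₊(s, x−(t−s)) ds and u₋(t,x) = u₋₀(x+t) + ∫₀ᵗ F₋(s, x+(t−s)) ds. Then, writing χ_Ω and χ_I for the indicator functions of Ω_R(x₀) and I_R(x₀), (∫₀ᵀ ∫_ℝ |χ_Ω(t,x) u₊(t,x) u₋(t,x)|^p dx dt)^{1/p} ≤ (1/2)^{1/p} (‖χ_I u₊₀‖_{L^p(ℝ)} + ∫₀ᵀ ‖χ_Ω(s,·) F₊(s,·)‖_{L^p(ℝ)}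 ds)(‖χ_I u₋₀‖_{L^p(ℝ)} + ∫₀ᵀ ‖χ_Ω(s,·) F₋(s,·)‖_{L^p(ℝ)} ds), whenever the right-hand side is finite. -/
open MeasureTheory Set
open scoped ENNReal NNReal

open Function in
theorem minkowski_lintegral_aux {α β : Type*} [MeasurableSpace α] [MeasurableSpace β]
    (μ : Measure α) [SigmaFinite μ] (ν : Measure β) [SFinite ν]
    {p : ℝ} (hp : 1 ≤ p) (F : β → α → ℝ≥0∞) (hF : Measurable (Function.uncurry F)) :
    (∫⁻ x, (∫⁻ s, F s x ∂ν) ^ p ∂μ) ^ (1 / p) ≤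
      ∫⁻ s, (∫⁻ x, F s x ^ p ∂μ) ^ (1 / p) ∂ν := by
  have hp0 : (0:ℝ) < p := lt_of_lt_of_le zero_lt_one hp
  have hFswap : Measurable (Function.uncurry fun x s => F s x) :=
    hF.comp measurable_swap
  rcases eq_or_lt_of_le hp with h1 | h1
  · rw [← h1]
    simp only [ENNReal.rpow_one, one_div_one]
    exact le_of_eq (lintegral_lintegral_swap hFswap.aemeasurable)
  have hΦm : Measurable fun x => ∫⁻ s, F s x ∂ν := hF.lintegral_prod_left
  set Φ : α → ℝ≥0∞ := fun x => ∫⁻ s, F s x ∂ν with hΦdef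
  set Rr : ℝ≥0∞ := ∫⁻ s, (∫⁻ x, F s x ^ p ∂μ) ^ (1 / p) ∂ν with hRdef
  have hq := Real.HolderConjugate.conjExponent h1
  set q : ℝ := Real.conjExponent p with hqdef
  have hpq1 : 1 / p + 1 / q = 1 := by
    rw [one_div, one_div]; exact hq.inv_add_inv_eq_inv.trans inv_one
  have hq0 : (0:ℝ) < q := hq.symm.pos
  -- main claim
  suffices hkey : ∫⁻ x, Φ x ^ p ∂μ ≤ Rr ^ p by
    calc (∫⁻ x, Φ x ^ p ∂μ) ^ (1/p) ≤ (Rr ^ p) ^ (1/p) :=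
          ENNReal.rpow_le_rpow hkey (by positivity)
      _ = Rr := by
          rw [← ENNReal.rpow_mul, mul_one_div, div_self hp0.ne', ENNReal.rpow_one]
  -- truncations
  set g : ℕ → α → ℝ≥0∞ := fun n x =>
    (spanningSets μ n).indicator (fun y => min (Φ y) n) x with hgdef
  have hgm : ∀ n, Measurable (g n) := fun n =>
    (hΦm.min measurable_const).indicator (measurableSet_spanningSets μ n)
  have hgle : ∀ n x, g n x ≤ Φ x := fun n x =>
    le_trans (Set.indicator_le_self _ _ x) (min_le_left _ _)
  have hgbd : ∀ n x, g n x ≤ (n : ℝ≥0∞) := by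
    intro n x
    by_cases hx : x ∈ spanningSets μ n
    · simp only [hgdef, Set.indicator_of_mem hx]; exact min_le_right _ _
    · simp only [hgdef, Set.indicator_of_notMem hx]; exact zero_le
  have hmono : Monotone g := by
    intro m n hmn x
    simp only [hgdef]
    by_cases hx : x ∈ spanningSets μ m
    · rw [Set.indicator_of_mem hx, Set.indicator_of_mem (monotone_spanningSets μ hmn hx)]
      exact min_le_min le_rfl (by exact_mod_cast Nat.cast_le.2 hmn)
    · rw [Set.indicator_of_notMem hx]; exact zero_le
  -- pointwise sup
  have hsup : ∀ x, Φ x ^ p = ⨆ n, g n x ^ p := by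
    intro x
    refine le_antisymm ?_ (iSup_le fun n => ENNReal.rpow_le_rpow (hgle n x) hp0.le)
    obtain ⟨N, hN⟩ : ∃ N, x ∈ spanningSets μ N :=
      Set.mem_iUnion.1 ((iUnion_spanningSets μ) ▸ Set.mem_univ x)
    by_cases htop : Φ x = ⊤
    · rw [htop]
      have h2 : ∀ n : ℕ, (n : ℝ≥0∞) ≤ ⨆ k, g k x ^ p := by
        intro n
        rcases Nat.eq_zero_or_pos n with hn0 | hn0
        · simp [hn0]
        have hmem : x ∈ spanningSets μ (max N n) :=
          monotone_spanningSets μ (le_max_left _ _) hN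
        have hg1 : g (max N n) x = ((max N n : ℕ) : ℝ≥0∞) := by
          simp only [hgdef, Set.indicator_of_mem hmem, htop]
          exact min_eq_right le_top
        refine le_trans ?_ (le_iSup (fun k => g k x ^ p) (max N n))
        rw [hg1]
        calc (n:ℝ≥0∞) ≤ ((max N n : ℕ) : ℝ≥0∞) := by
              exact_mod_cast Nat.cast_le.2 (le_max_right N n)
          _ = ((max N n : ℕ) : ℝ≥0∞) ^ (1:ℝ) := (ENNReal.rpow_one _).symm
          _ ≤ ((max N n : ℕ) : ℝ≥0∞) ^ p := by
              refine ENNReal.rpow_le_rpow_of_exponent_le ?_ hp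
              exact_mod_cast Nat.one_le_cast.2 (le_trans hn0 (le_max_right N n))
      calc (⊤:ℝ≥0∞) ^ p = ⊤ := ENNReal.top_rpow_of_pos hp0
          _ = ⨆ n : ℕ, (n:ℝ≥0∞) := ENNReal.iSup_natCast.symm
          _ ≤ ⨆ k, g k x ^ p := iSup_le h2
    · obtain ⟨n, hn⟩ := ENNReal.exists_nat_gt htop
      have hmem : x ∈ spanningSets μ (max N n) :=
        monotone_spanningSets μ (le_max_left _ _) hN
      refine le_trans ?_ (le_iSup (fun k => g k x ^ p) (max N n))
      have hg1 : g (max N n) x = Φ x := by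
        simp only [hgdef, Set.indicator_of_mem hmem]
        refine min_eq_left (le_trans hn.le ?_)
        exact_mod_cast Nat.cast_le.2 (le_max_right N n)
      rw [hg1]
  -- monotone convergence
  have hMCT : ∫⁻ x, Φ x ^ p ∂μ = ⨆ n, ∫⁻ x, g n x ^ p ∂μ := by
    rw [lintegral_congr hsup]
    exact lintegral_iSup
      (fun n => ENNReal.continuous_rpow_const.measurable.comp (hgm n))
      (fun m n hmn x => ENNReal.rpow_le_rpow (hmono hmn x) hp0.le)
  rw [hMCT]
  refine iSup_le fun n => ?_
  -- core argument for a fixed truncation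
  set G := g n with hGdef
  have hGm := hgm n
  have hGbd := hgbd n
  have hGtop : ∫⁻ x, G x ^ p ∂μ ≠ ⊤ := by
    have hb : ∫⁻ x, G x ^ p ∂μ ≤
        ∫⁻ x, (spanningSets μ n).indicator (fun _ => (n:ℝ≥0∞) ^ p) x ∂μ := by
      refine lintegral_mono fun x => ?_
      by_cases hx : x ∈ spanningSets μ n
      · rw [Set.indicator_of_mem hx]
        exact ENNReal.rpow_le_rpow (hGbd x) hp0.le
      · have : G x = 0 := by simp only [hGdef, hgdef, Set.indicator_of_notMem hx]
        rw [this, Set.indicator_of_notMem hx, ENNReal.zero_rpow_of_pos hp0]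
    rw [lintegral_indicator_const (measurableSet_spanningSets μ n)] at hb
    exact ne_top_of_le_ne_top
      (ENNReal.mul_ne_top (ENNReal.rpow_ne_top_of_nonneg hp0.le (ENNReal.natCast_ne_top n))
        (measure_spanningSets_lt_top μ n).ne) hb
  set C := ∫⁻ x, G x ^ p ∂μ with hCdef
  have step : C ≤ Rr * C ^ (1/q) := by
    have e1 : C = ∫⁻ x, G x ^ (p-1) * G x ∂μ := by
      refine lintegral_congr fun x => ?_
      by_cases h0 : G x = 0
      · rw [h0, ENNReal.zero_rpow_of_pos hp0, ENNReal.zero_rpow_of_pos (by linarith), mul_zero]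
      · have hxt : G x ≠ ⊤ := ne_top_of_le_ne_top (ENNReal.natCast_ne_top n) (hGbd x)
        have h2 := ENNReal.rpow_add (p-1) 1 h0 hxt
        rw [sub_add_cancel] at h2
        rw [h2, ENNReal.rpow_one]
    have e2 : ∫⁻ x, G x ^ (p-1) * G x ∂μ ≤ ∫⁻ x, G x ^ (p-1) * Φ x ∂μ :=
      lintegral_mono fun x => mul_le_mul_right (hgle n x) _
    have e3 : ∫⁻ x, G x ^ (p-1) * Φ x ∂μ = ∫⁻ x, ∫⁻ s, G x ^ (p-1) * F s x ∂ν ∂μ := by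
      refine lintegral_congr fun x => ?_
      have hFs : Measurable fun s => F s x := hF.comp measurable_prodMk_right
      exact (lintegral_const_mul _ hFs).symm
    have e4 : ∫⁻ x, ∫⁻ s, G x ^ (p-1) * F s x ∂ν ∂μ
        = ∫⁻ s, ∫⁻ x, G x ^ (p-1) * F s x ∂μ ∂ν := by
      refine lintegral_lintegral_swap ?_
      exact (((ENNReal.continuous_rpow_const.measurable.comp hGm).comp measurable_fst).mul
        (hF.comp measurable_swap)).aemeasurable
    have e5 : ∀ s, ∫⁻ x, G x ^ (p-1) * F s x ∂μ ≤ (∫⁻ x, F s x ^ p ∂μ) ^ (1/p) * C ^ (1/q) := by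
      intro s
      have hFs : Measurable fun x => F s x := hF.comp measurable_prodMk_left
      have hh := ENNReal.lintegral_mul_le_Lp_mul_Lq μ hq
        (f := fun x => F s x) (g := fun x => G x ^ (p-1))
        hFs.aemeasurable
        (ENNReal.continuous_rpow_const.measurable.comp hGm).aemeasurable
      simp only [Pi.mul_apply] at hh
      calc ∫⁻ x, G x ^ (p-1) * F s x ∂μ = ∫⁻ x, F s x * G x ^ (p-1) ∂μ := by
            simp_rw [mul_comm]
        _ ≤ (∫⁻ x, F s x ^ p ∂μ) ^ (1/p) * (∫⁻ x, (G x ^ (p-1)) ^ q ∂μ) ^ (1/q) := hh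
        _ = (∫⁻ x, F s x ^ p ∂μ) ^ (1/p) * C ^ (1/q) := by
            congr 1
            rw [hCdef]
            congr 1
            refine lintegral_congr fun x => ?_
            rw [← ENNReal.rpow_mul, hq.sub_one_mul_conj]
    calc C = ∫⁻ x, G x ^ (p-1) * G x ∂μ := e1
      _ ≤ ∫⁻ x, G x ^ (p-1) * Φ x ∂μ := e2
      _ = ∫⁻ s, ∫⁻ x, G x ^ (p-1) * F s x ∂μ ∂ν := by rw [e3, e4]
      _ ≤ ∫⁻ s, (∫⁻ x, F s x ^ p ∂μ) ^ (1/p) * C ^ (1/q) ∂ν := lintegral_mono fun s => e5 s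
      _ = Rr * C ^ (1/q) := by
          rw [hRdef]
          exact lintegral_mul_const _ (ENNReal.continuous_rpow_const.measurable.comp
            (Measurable.lintegral_prod_right
              (ENNReal.continuous_rpow_const.measurable.comp hF)))
  by_cases hC0 : C = 0
  · exact hC0 ▸ zero_le
  have hCq0 : C ^ (1/q) ≠ 0 := by
    rw [Ne, ENNReal.rpow_eq_zero_iff]
    push_neg
    exact ⟨fun h => absurd h hC0, fun h => absurd h hGtop⟩
  have hCqt : C ^ (1/q) ≠ ⊤ := ENNReal.rpow_ne_top_of_nonneg (by positivity) hGtop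
  have hCsplit : C = C ^ (1/p) * C ^ (1/q) := by
    rw [← ENNReal.rpow_add _ _ hC0 hGtop, hpq1, ENNReal.rpow_one]
  have hle : C ^ (1/p) ≤ Rr :=
    (ENNReal.mul_le_mul_iff_left hCq0 hCqt).1 (hCsplit ▸ step)
  calc C = (C ^ (1/p)) ^ p := by
        rw [← ENNReal.rpow_mul, one_div, inv_mul_cancel₀ hp0.ne', ENNReal.rpow_one]
    _ ≤ Rr ^ p := ENNReal.rpow_le_rpow hle hp0.le


/-- Bilinear transport estimate localized to the backward light triangle
`Ω_R(x₀) = {(t,x) : 0 ≤ t ≤ R, |x−x₀| ≤ R−t}`: for the Duhamel solutions `u₊`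
of `∂ₜu₊ + ∂ₓu₊ = F₊`, `u₊(0) = u₊₀`, and `u₋` of `∂ₜu₋ − ∂ₓu₋ = F₋`,
`u₋(0) = u₋₀`, the `L^p((0,T)×ℝ)` norm of `χ_Ω u₊u₋` is controlled in terms of
the data restricted to `I_R(x₀) = {x : |x−x₀| ≤ R}` and the forcings restricted
to `Ω_R(x₀)`, whenever the right-hand side is finite. -/
theorem bilinear_estimate_localized
    (p : ℝ≥0∞) (hp : 1 ≤ p) (hp' : p ≠ ⊤)
    (x₀ R : ℝ) (hR : 0 < R)
    (T : ℝ) (hT : 0 < T) (hTR : T ≤ R)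
    (Ω : Set (ℝ × ℝ)) (hΩ : Ω = {q : ℝ × ℝ | 0 ≤ q.1 ∧ q.1 ≤ R ∧ |q.2 - x₀| ≤ R - q.1})
    (I : Set ℝ) (hI : I = {x : ℝ | |x - x₀| ≤ R})
    (up0 um0 : ℝ → ℂ)
    (hup0 : MemLp up0 p volume) (hum0 : MemLp um0 p volume)
    (Fp Fm : ℝ → ℝ → ℂ)
    (hFpmeas : Measurable (Function.uncurry Fp))
    (hFmmeas : Measurable (Function.uncurry Fm))
    (up um : ℝ → ℝ → ℂ)
    (hup : ∀ t x : ℝ, up t x = up0 (x - t) + (∫ s in (0:ℝ)..t, Fp s (x - (t - s))))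
    (hum : ∀ t x : ℝ, um t x = um0 (x + t) + (∫ s in (0:ℝ)..t, Fm s (x + (t - s))))
    (RHS : ℝ≥0∞)
    (hRHS : RHS = (1/2 : ℝ≥0∞) ^ (1/p.toReal) *
        (eLpNorm (I.indicator up0) p volume +
          (∫⁻ s in Ioo (0:ℝ) T,
            eLpNorm (fun x => Ω.indicator (fun q : ℝ × ℝ => Fp q.1 q.2) (s, x)) p volume)) *
        (eLpNorm (I.indicator um0) p volume +
          (∫⁻ s in Ioo (0:ℝ) T,
            eLpNorm (fun x => Ω.indicator (fun q : ℝ × ℝ => Fm q.1 q.2) (s, x)) p volume)))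
    (hfin : RHS ≠ ⊤) :
    eLpNorm (Ω.indicator (fun q : ℝ × ℝ => up q.1 q.2 * um q.1 q.2)) p
        ((volume.restrict (Ioo (0:ℝ) T)).prod volume) ≤ RHS := by
  have hp0 : p ≠ 0 := fun h => by simp [h] at hp
  have hpr : 1 ≤ p.toReal := by
    rw [← ENNReal.toReal_one]
    exact ENNReal.toReal_mono hp' hp
  set pr := p.toReal with hprdef
  have hpr0 : (0:ℝ) < pr := lt_of_lt_of_le zero_lt_one hpr
  have hΩm : MeasurableSet Ω := by
    rw [hΩ]
    refine IsClosed.measurableSet ?_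
    have h1 : IsClosed {q : ℝ × ℝ | 0 ≤ q.1} := isClosed_le continuous_const continuous_fst
    have h2 : IsClosed {q : ℝ × ℝ | q.1 ≤ R} := isClosed_le continuous_fst continuous_const
    have h3 : IsClosed {q : ℝ × ℝ | |q.2 - x₀| ≤ R - q.1} :=
      isClosed_le (continuous_snd.sub continuous_const).abs (continuous_const.sub continuous_fst)
    exact h1.inter (h2.inter h3)
  have hIm : MeasurableSet I := by
    rw [hI]
    exact (isClosed_le (continuous_id.sub continuous_const).abs continuous_const).measurableSet
  obtain ⟨f, hfm, hfeq⟩ : ∃ f : ℝ → ℂ, Measurable f ∧ up0 =ᵐ[volume] f :=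
    hup0.aestronglyMeasurable.aemeasurable
  obtain ⟨g, hgm, hgeq⟩ : ∃ g : ℝ → ℂ, Measurable g ∧ um0 =ᵐ[volume] g :=
    hum0.aestronglyMeasurable.aemeasurable
  set μprod := (volume.restrict (Ioo (0:ℝ) T)).prod (volume : Measure ℝ) with hμdef
  set Kp : ℝ × ℝ → ℝ≥0∞ :=
    fun q => (‖Ω.indicator (fun q : ℝ × ℝ => Fp q.1 q.2) q‖₊ : ℝ≥0∞) with hKpdef
  set Km : ℝ × ℝ → ℝ≥0∞ :=
    fun q => (‖Ω.indicator (fun q : ℝ × ℝ => Fm q.1 q.2) q‖₊ : ℝ≥0∞) with hKmdef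
  have hFp' : Measurable fun q : ℝ × ℝ => Fp q.1 q.2 := hFpmeas
  have hFm' : Measurable fun q : ℝ × ℝ => Fm q.1 q.2 := hFmmeas
  have hKpm : Measurable Kp := (hFp'.indicator hΩm).enorm
  have hKmm : Measurable Km := (hFm'.indicator hΩm).enorm
  have hKp1 : Measurable (Function.uncurry fun s y : ℝ => Kp (s, y + s)) := by
    have h : Measurable fun q : ℝ × ℝ => (q.1, q.2 + q.1) :=
      measurable_fst.prodMk (measurable_snd.add measurable_fst)
    exact hKpm.comp h
  have hKm1 : Measurable (Function.uncurry fun s y : ℝ => Km (s, y - s)) := by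
    have h : Measurable fun q : ℝ × ℝ => (q.1, q.2 - q.1) :=
      measurable_fst.prodMk (measurable_snd.sub measurable_fst)
    exact hKmm.comp h
  set Gp : ℝ → ℝ≥0∞ :=
    fun y => (‖I.indicator f y‖₊ : ℝ≥0∞) + ∫⁻ s in Ioo (0:ℝ) T, Kp (s, y + s) with hGpdef
  set Gm : ℝ → ℝ≥0∞ :=
    fun y => (‖I.indicator g y‖₊ : ℝ≥0∞) + ∫⁻ s in Ioo (0:ℝ) T, Km (s, y - s) with hGmdef
  have hGpm : Measurable Gp :=
    (hfm.indicator hIm).enorm.add hKp1.lintegral_prod_left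
  have hGmm : Measurable Gm :=
    (hgm.indicator hIm).enorm.add hKm1.lintegral_prod_left
  -- a.e. facts
  have haet : ∀ᵐ q : ℝ × ℝ ∂μprod, q.1 ∈ Ioo (0:ℝ) T := by
    rw [ae_iff]
    have hset : {q : ℝ × ℝ | ¬ q.1 ∈ Ioo (0:ℝ) T} = (Ioo (0:ℝ) T)ᶜ ×ˢ (univ : Set ℝ) := by
      ext q; simp [Set.mem_prod]
    rw [hμdef, hset, Measure.prod_prod, Measure.restrict_apply measurableSet_Ioo.compl]
    simp
  have hqmp : ∀ (c : ℝ) (N : Set ℝ), volume N = 0 →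
      μprod {q : ℝ × ℝ | q.2 + c * q.1 ∈ N} = 0 := by
    intro c N hN
    obtain ⟨N', hNN', hN'm, hN'0⟩ := exists_measurable_superset_of_null hN
    have hsub : {q : ℝ × ℝ | q.2 + c * q.1 ∈ N} ⊆ (fun q : ℝ × ℝ => q.2 + c * q.1) ⁻¹' N' :=
      fun q hq => hNN' hq
    refine measure_mono_null hsub ?_
    have hmf : Measurable fun q : ℝ × ℝ => q.2 + c * q.1 :=
      measurable_snd.add (measurable_fst.const_mul c)
    rw [hμdef, Measure.prod_apply (hmf hN'm)]
    have hz : ∀ t : ℝ, volume (Prod.mk t ⁻¹' ((fun q : ℝ × ℝ => q.2 + c * q.1) ⁻¹' N')) = 0 := by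
      intro t
      have he : (Prod.mk t ⁻¹' ((fun q : ℝ × ℝ => q.2 + c * q.1) ⁻¹' N'))
          = (fun x : ℝ => x + c * t) ⁻¹' N' := rfl
      rw [he, measure_preimage_add_right]
      exact hN'0
    simp [hz]
  have hae1 : ∀ᵐ q : ℝ × ℝ ∂μprod, up0 (q.2 - q.1) = f (q.2 - q.1) := by
    have hN : volume {y : ℝ | ¬ up0 y = f y} = 0 := ae_iff.1 hfeq
    have := hqmp (-1) _ hN
    rw [ae_iff]
    have hset : {q : ℝ × ℝ | ¬ up0 (q.2 - q.1) = f (q.2 - q.1)}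
        = {q : ℝ × ℝ | q.2 + (-1) * q.1 ∈ {y : ℝ | ¬ up0 y = f y}} := by
      ext q; simp only [Set.mem_setOf_eq, neg_one_mul, ← sub_eq_add_neg]
    rw [hset]; exact this
  have hae2 : ∀ᵐ q : ℝ × ℝ ∂μprod, um0 (q.2 + q.1) = g (q.2 + q.1) := by
    have hN : volume {y : ℝ | ¬ um0 y = g y} = 0 := ae_iff.1 hgeq
    have := hqmp 1 _ hN
    rw [ae_iff]
    have hset : {q : ℝ × ℝ | ¬ um0 (q.2 + q.1) = g (q.2 + q.1)}
        = {q : ℝ × ℝ | q.2 + 1 * q.1 ∈ {y : ℝ | ¬ um0 y = g y}} := by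
      ext q; simp only [Set.mem_setOf_eq, one_mul]
    rw [hset]; exact this
  -- pointwise bound
  have hbound : ∀ᵐ q : ℝ × ℝ ∂μprod,
      (‖Ω.indicator (fun q : ℝ × ℝ => up q.1 q.2 * um q.1 q.2) q‖₊ : ℝ≥0∞)
        ≤ Gp (q.2 - q.1) * Gm (q.2 + q.1) := by
    filter_upwards [haet, hae1, hae2] with q hq1 he1 he2
    obtain ⟨t, x⟩ := q
    simp only at he1 he2 hq1 ⊢
    by_cases hqΩ : (t, x) ∈ Ω
    · rw [Set.indicator_of_mem hqΩ]
      have hmemΩ : 0 ≤ t ∧ t ≤ R ∧ |x - x₀| ≤ R - t := by rw [hΩ] at hqΩ; exact hqΩ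
      obtain ⟨ht0, htR, hxx⟩ := hmemΩ
      obtain ⟨hxl, hxr⟩ := abs_le.mp hxx
      obtain ⟨ht0', htT⟩ := hq1
      have hA : (‖up t x‖₊ : ℝ≥0∞) ≤ Gp (x - t) := by
        rw [hup t x]
        calc (‖up0 (x - t) + ∫ s in (0:ℝ)..t, Fp s (x - (t - s))‖₊ : ℝ≥0∞)
            ≤ (‖up0 (x - t)‖₊ : ℝ≥0∞) + (‖∫ s in (0:ℝ)..t, Fp s (x - (t - s))‖₊ : ℝ≥0∞) := by
              exact_mod_cast nnnorm_add_le _ _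
          _ ≤ Gp (x - t) := by
              rw [hGpdef]
              refine add_le_add (le_of_eq ?_) ?_
              · have hxtI : x - t ∈ I := by
                  rw [hI]; simp only [Set.mem_setOf_eq]
                  rw [abs_le]; constructor <;> linarith
                rw [Set.indicator_of_mem hxtI, he1]
              · calc (‖∫ s in (0:ℝ)..t, Fp s (x - (t - s))‖₊ : ℝ≥0∞)
                    ≤ ∫⁻ s in Ioc (0:ℝ) t, (‖Fp s (x - (t - s))‖₊ : ℝ≥0∞) := by
                      rw [intervalIntegral.integral_of_le ht0]
                      exact enorm_integral_le_lintegral_enorm _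
                  _ ≤ ∫⁻ s in Ioc (0:ℝ) t, Kp (s, (x - t) + s) := by
                      refine setLIntegral_mono (hKpm.comp
                        (measurable_id.prodMk (measurable_const.add measurable_id))) ?_
                      intro s hs
                      obtain ⟨hs0, hst⟩ := hs
                      have hmem : (s, (x - t) + s) ∈ Ω := by
                        rw [hΩ]
                        refine ⟨hs0.le, by linarith, ?_⟩
                        simp only
                        rw [abs_le]; constructor <;> linarith
                      rw [hKpdef]
                      simp only
                      rw [Set.indicator_of_mem hmem]
                      rw [show x - (t - s) = x - t + s by ring]
                  _ ≤ ∫⁻ s in Ioo (0:ℝ) T, Kp (s, (x - t) + s) :=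
                      lintegral_mono_set (fun s hs => ⟨hs.1, lt_of_le_of_lt hs.2 htT⟩)
      have hB : (‖um t x‖₊ : ℝ≥0∞) ≤ Gm (x + t) := by
        rw [hum t x]
        calc (‖um0 (x + t) + ∫ s in (0:ℝ)..t, Fm s (x + (t - s))‖₊ : ℝ≥0∞)
            ≤ (‖um0 (x + t)‖₊ : ℝ≥0∞) + (‖∫ s in (0:ℝ)..t, Fm s (x + (t - s))‖₊ : ℝ≥0∞) := by
              exact_mod_cast nnnorm_add_le _ _
          _ ≤ Gm (x + t) := by
              rw [hGmdef]
              refine add_le_add (le_of_eq ?_) ?_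
              · have hxtI : x + t ∈ I := by
                  rw [hI]; simp only [Set.mem_setOf_eq]
                  rw [abs_le]; constructor <;> linarith
                rw [Set.indicator_of_mem hxtI, he2]
              · calc (‖∫ s in (0:ℝ)..t, Fm s (x + (t - s))‖₊ : ℝ≥0∞)
                    ≤ ∫⁻ s in Ioc (0:ℝ) t, (‖Fm s (x + (t - s))‖₊ : ℝ≥0∞) := by
                      rw [intervalIntegral.integral_of_le ht0]
                      exact enorm_integral_le_lintegral_enorm _
                  _ ≤ ∫⁻ s in Ioc (0:ℝ) t, Km (s, (x + t) - s) := by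
                      refine setLIntegral_mono (hKmm.comp
                        (measurable_id.prodMk (measurable_const.sub measurable_id))) ?_
                      intro s hs
                      obtain ⟨hs0, hst⟩ := hs
                      have hmem : (s, (x + t) - s) ∈ Ω := by
                        rw [hΩ]
                        refine ⟨hs0.le, by linarith, ?_⟩
                        simp only
                        rw [abs_le]; constructor <;> linarith
                      rw [hKmdef]
                      simp only
                      rw [Set.indicator_of_mem hmem]
                      rw [show x + (t - s) = x + t - s by ring]
                  _ ≤ ∫⁻ s in Ioo (0:ℝ) T, Km (s, (x + t) - s) :=
                      lintegral_mono_set (fun s hs => ⟨hs.1, lt_of_le_of_lt hs.2 htT⟩)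
      calc (‖up t x * um t x‖₊ : ℝ≥0∞)
          = (‖up t x‖₊ : ℝ≥0∞) * (‖um t x‖₊ : ℝ≥0∞) := by
            rw [nnnorm_mul, ENNReal.coe_mul]
        _ ≤ Gp (x - t) * Gm (x + t) := mul_le_mul' hA hB
    · rw [Set.indicator_of_notMem hqΩ]
      simp
  -- measurability of rpow'd functions
  have mGp : Measurable fun y => Gp y ^ pr :=
    ENNReal.continuous_rpow_const.measurable.comp hGpm
  have mGm : Measurable fun y => Gm y ^ pr :=
    ENNReal.continuous_rpow_const.measurable.comp hGmm
  have hprinv : (0:ℝ) ≤ 1/pr := one_div_nonneg.mpr hpr0.le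
  -- scaling estimate
  have hhalf : ∀ y : ℝ, (∫⁻ t in Ioo (0:ℝ) T, Gm (y + 2*t) ^ pr)
      ≤ (1/2 : ℝ≥0∞) * ∫⁻ z, Gm z ^ pr := by
    intro y
    have hmg : Measurable fun z : ℝ => Gm (z + y) ^ pr :=
      mGm.comp (measurable_id.add_const y)
    calc (∫⁻ t in Ioo (0:ℝ) T, Gm (y + 2*t) ^ pr)
        ≤ ∫⁻ t, Gm (y + 2*t) ^ pr := setLIntegral_le_lintegral _ _
      _ = ∫⁻ t, (fun z => Gm (z + y) ^ pr) (2*t) := by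
          refine lintegral_congr fun t => ?_
          simp only
          rw [show 2*t + y = y + 2*t by ring]
      _ = ∫⁻ z, Gm (z + y) ^ pr ∂(Measure.map (fun t : ℝ => 2*t) volume) :=
          (lintegral_map hmg (measurable_id.const_mul 2)).symm
      _ = (1/2 : ℝ≥0∞) * ∫⁻ z, Gm (z + y) ^ pr := by
          rw [Real.map_volume_mul_left (by norm_num : (2:ℝ) ≠ 0), lintegral_smul_measure]
          congr 1
          rw [abs_of_pos (by norm_num : (0:ℝ) < 2⁻¹),
            ENNReal.ofReal_inv_of_pos (by norm_num : (0:ℝ) < 2), one_div]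
          norm_num
      _ = (1/2 : ℝ≥0∞) * ∫⁻ z, Gm z ^ pr := by
          rw [lintegral_add_right_eq_self (fun z => Gm z ^ pr) y]
  -- main product bound
  have hGG : Measurable fun q : ℝ × ℝ => Gp (q.2 - q.1) ^ pr * Gm (q.2 + q.1) ^ pr :=
    (mGp.comp (measurable_snd.sub measurable_fst)).mul
      (mGm.comp (measurable_snd.add measurable_fst))
  have main : (∫⁻ q, (‖Ω.indicator (fun q : ℝ × ℝ => up q.1 q.2 * um q.1 q.2) q‖₊ : ℝ≥0∞) ^ pr ∂μprod)
      ≤ (1/2 : ℝ≥0∞) * ((∫⁻ y, Gp y ^ pr) * (∫⁻ y, Gm y ^ pr)) := by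
    have step1 : (∫⁻ q, (‖Ω.indicator (fun q : ℝ × ℝ => up q.1 q.2 * um q.1 q.2) q‖₊ : ℝ≥0∞) ^ pr ∂μprod)
        ≤ ∫⁻ q, Gp (q.2 - q.1) ^ pr * Gm (q.2 + q.1) ^ pr ∂μprod := by
      refine lintegral_mono_ae (hbound.mono fun q hq => ?_)
      calc (‖Ω.indicator (fun q : ℝ × ℝ => up q.1 q.2 * um q.1 q.2) q‖₊ : ℝ≥0∞) ^ pr
          ≤ (Gp (q.2 - q.1) * Gm (q.2 + q.1)) ^ pr := ENNReal.rpow_le_rpow hq hpr0.le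
        _ = Gp (q.2 - q.1) ^ pr * Gm (q.2 + q.1) ^ pr :=
            ENNReal.mul_rpow_of_nonneg _ _ hpr0.le
    calc (∫⁻ q, (‖Ω.indicator (fun q : ℝ × ℝ => up q.1 q.2 * um q.1 q.2) q‖₊ : ℝ≥0∞) ^ pr ∂μprod)
        ≤ ∫⁻ q, Gp (q.2 - q.1) ^ pr * Gm (q.2 + q.1) ^ pr ∂μprod := step1
      _ = ∫⁻ t in Ioo (0:ℝ) T, ∫⁻ x, Gp (x - t) ^ pr * Gm (x + t) ^ pr := by
          rw [hμdef]
          exact lintegral_prod _ hGG.aemeasurable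
      _ = ∫⁻ t in Ioo (0:ℝ) T, ∫⁻ y, Gp y ^ pr * Gm (y + 2*t) ^ pr := by
          refine lintegral_congr fun t => ?_
          rw [← lintegral_add_right_eq_self (fun x => Gp (x - t) ^ pr * Gm (x + t) ^ pr) t]
          refine lintegral_congr fun y => ?_
          rw [show y + t - t = y by ring, show y + t + t = y + 2*t by ring]
      _ = ∫⁻ y, ∫⁻ t in Ioo (0:ℝ) T, Gp y ^ pr * Gm (y + 2*t) ^ pr := by
          refine lintegral_lintegral_swap ?_
          exact ((mGp.comp measurable_snd).mul
            (mGm.comp (measurable_snd.add (measurable_fst.const_mul 2)))).aemeasurable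
      _ = ∫⁻ y, Gp y ^ pr * ∫⁻ t in Ioo (0:ℝ) T, Gm (y + 2*t) ^ pr := by
          refine lintegral_congr fun y => ?_
          exact lintegral_const_mul _ (mGm.comp (measurable_const.add (measurable_id.const_mul 2)))
      _ ≤ ∫⁻ y, Gp y ^ pr * ((1/2 : ℝ≥0∞) * ∫⁻ z, Gm z ^ pr) :=
          lintegral_mono fun y => mul_le_mul_right (hhalf y) _
      _ = (∫⁻ y, Gp y ^ pr) * ((1/2 : ℝ≥0∞) * ∫⁻ z, Gm z ^ pr) := lintegral_mul_const _ mGp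
      _ = (1/2 : ℝ≥0∞) * ((∫⁻ y, Gp y ^ pr) * (∫⁻ y, Gm y ^ pr)) := by ring
  -- Lp bound for Gp
  have hindeqp : I.indicator up0 =ᵐ[volume] I.indicator f := by
    filter_upwards [hfeq] with y hy
    by_cases h : y ∈ I <;>
      simp [Set.indicator_of_mem, Set.indicator_of_notMem, h, hy]
  have hindeqm : I.indicator um0 =ᵐ[volume] I.indicator g := by
    filter_upwards [hgeq] with y hy
    by_cases h : y ∈ I <;>
      simp [Set.indicator_of_mem, Set.indicator_of_notMem, h, hy]
  have hXp : (∫⁻ y, Gp y ^ pr) ^ (1/pr)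
      ≤ eLpNorm (I.indicator up0) p volume +
        ∫⁻ s in Ioo (0:ℝ) T,
          eLpNorm (fun x => Ω.indicator (fun q : ℝ × ℝ => Fp q.1 q.2) (s, x)) p volume := by
    have htri := ENNReal.lintegral_Lp_add_le (μ := (volume : Measure ℝ))
      (f := fun y => (‖I.indicator f y‖₊ : ℝ≥0∞))
      (g := fun y => ∫⁻ s in Ioo (0:ℝ) T, Kp (s, y + s))
      (hfm.indicator hIm).enorm.aemeasurable hKp1.lintegral_prod_left.aemeasurable hpr
    simp only [Pi.add_apply] at htri
    refine le_trans htri (add_le_add ?_ ?_)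
    · refine le_of_eq ?_
      rw [eLpNorm_congr_ae hindeqp, eLpNorm_eq_lintegral_rpow_enorm_toReal hp0 hp', ← hprdef]; rfl
    · have hmink := minkowski_lintegral_aux (volume : Measure ℝ)
        (volume.restrict (Ioo (0:ℝ) T)) hpr (fun s y => Kp (s, y + s)) hKp1
      refine le_trans hmink (le_of_eq (lintegral_congr fun s => ?_))
      have e : (∫⁻ y, Kp (s, y + s) ^ pr) = ∫⁻ y, Kp (s, y) ^ pr :=
        lintegral_add_right_eq_self (fun y => Kp (s, y) ^ pr) s
      calc (∫⁻ y, Kp (s, y + s) ^ pr) ^ (1/pr)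
          = (∫⁻ y, Kp (s, y) ^ pr) ^ (1/pr) := congrArg (· ^ (1/pr)) e
        _ = eLpNorm (fun x => Ω.indicator (fun q : ℝ × ℝ => Fp q.1 q.2) (s, x)) p volume := by
            rw [eLpNorm_eq_lintegral_rpow_enorm_toReal hp0 hp', ← hprdef]; rfl
  have hXm : (∫⁻ y, Gm y ^ pr) ^ (1/pr)
      ≤ eLpNorm (I.indicator um0) p volume +
        ∫⁻ s in Ioo (0:ℝ) T,
          eLpNorm (fun x => Ω.indicator (fun q : ℝ × ℝ => Fm q.1 q.2) (s, x)) p volume := by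
    have htri := ENNReal.lintegral_Lp_add_le (μ := (volume : Measure ℝ))
      (f := fun y => (‖I.indicator g y‖₊ : ℝ≥0∞))
      (g := fun y => ∫⁻ s in Ioo (0:ℝ) T, Km (s, y - s))
      (hgm.indicator hIm).enorm.aemeasurable hKm1.lintegral_prod_left.aemeasurable hpr
    simp only [Pi.add_apply] at htri
    refine le_trans htri (add_le_add ?_ ?_)
    · refine le_of_eq ?_
      rw [eLpNorm_congr_ae hindeqm, eLpNorm_eq_lintegral_rpow_enorm_toReal hp0 hp', ← hprdef]; rfl
    · have hmink := minkowski_lintegral_aux (volume : Measure ℝ)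
        (volume.restrict (Ioo (0:ℝ) T)) hpr (fun s y => Km (s, y - s)) hKm1
      refine le_trans hmink (le_of_eq (lintegral_congr fun s => ?_))
      have e : (∫⁻ y, Km (s, y - s) ^ pr) = ∫⁻ y, Km (s, y) ^ pr :=
        lintegral_sub_right_eq_self (fun y => Km (s, y) ^ pr) s
      calc (∫⁻ y, Km (s, y - s) ^ pr) ^ (1/pr)
          = (∫⁻ y, Km (s, y) ^ pr) ^ (1/pr) := congrArg (· ^ (1/pr)) e
        _ = eLpNorm (fun x => Ω.indicator (fun q : ℝ × ℝ => Fm q.1 q.2) (s, x)) p volume := by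
            rw [eLpNorm_eq_lintegral_rpow_enorm_toReal hp0 hp', ← hprdef]; rfl
  -- final assembly
  rw [eLpNorm_eq_lintegral_rpow_enorm_toReal hp0 hp', hRHS, ← hprdef]
  calc (∫⁻ q, (‖Ω.indicator (fun q : ℝ × ℝ => up q.1 q.2 * um q.1 q.2) q‖₊ : ℝ≥0∞) ^ pr ∂μprod) ^ (1/pr)
      ≤ ((1/2 : ℝ≥0∞) * ((∫⁻ y, Gp y ^ pr) * (∫⁻ y, Gm y ^ pr))) ^ (1/pr) :=
        ENNReal.rpow_le_rpow main hprinv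
    _ = (1/2 : ℝ≥0∞) ^ (1/pr) * ((∫⁻ y, Gp y ^ pr) ^ (1/pr) * (∫⁻ y, Gm y ^ pr) ^ (1/pr)) := by
        rw [ENNReal.mul_rpow_of_nonneg _ _ hprinv, ENNReal.mul_rpow_of_nonneg _ _ hprinv]
    _ ≤ (1/2 : ℝ≥0∞) ^ (1/pr) *
        ((eLpNorm (I.indicator up0) p volume +
          ∫⁻ s in Ioo (0:ℝ) T,
            eLpNorm (fun x => Ω.indicator (fun q : ℝ × ℝ => Fp q.1 q.2) (s, x)) p volume) *
         (eLpNorm (I.indicator um0) p volume +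
          ∫⁻ s in Ioo (0:ℝ) T,
            eLpNorm (fun x => Ω.indicator (fun q : ℝ × ℝ => Fm q.1 q.2) (s, x)) p volume)) :=
        mul_le_mul_right (mul_le_mul' hXp hXm) _
    _ = (1/2 : ℝ≥0∞) ^ (1/pr) *
        (eLpNorm (I.indicator up0) p volume +
          ∫⁻ s in Ioo (0:ℝ) T,
            eLpNorm (fun x => Ω.indicator (fun q : ℝ × ℝ => Fp q.1 q.2) (s, x)) p volume) *
        (eLpNorm (I.indicator um0) p volume +
          ∫⁻ s in Ioo (0:ℝ) T,
            eLpNorm (fun x => Ω.indicator (fun q : ℝ × ℝ => Fm q.1 q.2) (s, x)) p volume) :=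
        (mul_assoc _ _ _).symm
end

section
/- Let T > 0 and let u₊, u₋, v₊, v₋ : [0,T] × ℝ → ℂ be bounded measurable functions and u₊₀, u₋₀, v₊₀, v₋₀ : ℝ → ℂ be bounded measurable functions such that for all (t,x) ∈ [0,T] × ℝ: u₊(t,x) = u₊₀(x−t) + ∫₀ᵗ (u₊v₊)(s, x−(t−s)) ds, u₋(t,x) = u₋₀(x+t) + ∫₀ᵗ (u₋v₋)(s, x+(t−s)) ds, v₊(t,x) = v₊₀(x−t) + ∫₀ᵗ (u₊v₊)(s, x−(t−s)) ds, and v₋(t,x) = v₋₀(x+t) + ∫₀ᵗ (u₋v₋)(s, x+(t−s)) ds. Suppose that for some x₀ ∈ ℝ and R > 0 one has u₊₀(x) = u₋₀(x) = v₊₀(x) = v₋₀(x) = 0 for all x with |x − x₀| < R. Then for every t with 0 < t < min(T, R) and every x with |x − x₀| < R − t, one has u₊(t,x) = u₋(t,x) = v₊(t,x) = v₋(t,x) = 0. -/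
open MeasureTheory Set
open MeasureTheory Set

theorem fsp_aux
    (T : ℝ) (u v : ℝ → ℝ → ℂ) (u0 v0 : ℝ → ℂ)
    (hu : Measurable (Function.uncurry u)) (hv : Measurable (Function.uncurry v))
    (C : ℝ) (hC : 0 ≤ C)
    (hb : ∀ t ∈ Icc (0:ℝ) T, ∀ x : ℝ, ‖u t x‖ ≤ C ∧ ‖v t x‖ ≤ C)
    (e : ℝ) (he : |e| = 1)
    (hequ : ∀ t ∈ Icc (0:ℝ) T, ∀ x : ℝ, u t x = u0 (x - e*t) +
      ∫ s in (0:ℝ)..t, u s (x - e*(t-s)) * v s (x - e*(t-s)))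
    (heqv : ∀ t ∈ Icc (0:ℝ) T, ∀ x : ℝ, v t x = v0 (x - e*t) +
      ∫ s in (0:ℝ)..t, u s (x - e*(t-s)) * v s (x - e*(t-s)))
    (x₀ R : ℝ)
    (hz : ∀ x : ℝ, |x - x₀| < R → u0 x = 0 ∧ v0 x = 0) :
    ∀ t x : ℝ, 0 ≤ t → t < min T R → |x - x₀| < R - t →
      u t x = 0 ∧ v t x = 0 := by
  have bound : ∀ n : ℕ, ∀ t x : ℝ, 0 ≤ t → t < min T R → |x - x₀| < R - t →
      ‖u t x‖ ≤ C * (C*t)^n / n.factorial ∧ ‖v t x‖ ≤ C * (C*t)^n / n.factorial := by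
    intro n
    induction n with
    | zero =>
      intro t x ht0 htm hx
      have htT : t ∈ Icc (0:ℝ) T := ⟨ht0, (le_of_lt (lt_of_lt_of_le htm (min_le_left _ _)))⟩
      simpa using hb t htT x
    | succ n ih =>
      intro t x ht0 htm hx
      have htT : t ∈ Icc (0:ℝ) T := ⟨ht0, (le_of_lt (lt_of_lt_of_le htm (min_le_left _ _)))⟩
      have habs : |x - e*t - x₀| < R := by
        have h1 : |x - e*t - x₀| ≤ |x - x₀| + |e*t| := by
          have h : x - e*t - x₀ = (x - x₀) + (-(e*t)) := by ring
          rw [h]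
          exact (abs_add_le _ _).trans (by rw [abs_neg])
        have h2 : |e*t| = t := by rw [abs_mul, he, one_mul, abs_of_nonneg ht0]
        linarith
      set F : ℝ → ℂ := fun s => u s (x - e*(t-s)) * v s (x - e*(t-s)) with hF
      have hg : IntervalIntegrable (fun s : ℝ => C^2 * (C*s)^n / n.factorial)
          MeasureTheory.volume 0 t := by
        apply Continuous.intervalIntegrable; fun_prop
      have hptwise : ∀ s ∈ Set.uIoc (0:ℝ) t, ‖F s‖ ≤ C^2 * (C*s)^n / n.factorial := by
        intro s hs
        rw [uIoc_of_le ht0] at hs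
        obtain ⟨hs0, hst⟩ := hs
        have hsm : s < min T R := lt_of_le_of_lt hst htm
        have hsT : s ∈ Icc (0:ℝ) T := ⟨le_of_lt hs0, le_of_lt (lt_of_lt_of_le hsm (min_le_left _ _))⟩
        set y := x - e*(t-s) with hy
        have hycone : |y - x₀| < R - s := by
          have h1 : |y - x₀| ≤ |x - x₀| + |e*(t-s)| := by
            have h : y - x₀ = (x - x₀) + (-(e*(t-s))) := by rw [hy]; ring
            rw [h]
            exact (abs_add_le _ _).trans (by rw [abs_neg])
          have h2 : |e*(t-s)| = t - s := by
            rw [abs_mul, he, one_mul, abs_of_nonneg (by linarith)]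
          linarith
        have hU := (ih s y (le_of_lt hs0) hsm hycone).1
        have hV := (hb s hsT y).2
        calc ‖F s‖ = ‖u s y‖ * ‖v s y‖ := norm_mul _ _
          _ ≤ (C * (C*s)^n / n.factorial) * C := by
              apply mul_le_mul hU hV (norm_nonneg _)
              positivity
          _ = C^2 * (C*s)^n / n.factorial := by ring
      have hnorm : ‖∫ s in (0:ℝ)..t, F s‖ ≤ |∫ s in (0:ℝ)..t, C^2 * (C*s)^n / n.factorial| :=
        intervalIntegral.norm_integral_le_abs_of_norm_le
          ((ae_restrict_iff' measurableSet_uIoc).mpr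
            (Filter.Eventually.of_forall hptwise)) hg
      have hint : (∫ s in (0:ℝ)..t, C^2 * (C*s)^n / n.factorial)
          = C * (C*t)^(n+1) / (n+1).factorial := by
        have h : ∀ s : ℝ, C^2 * (C*s)^n / n.factorial
            = (C^2 * C^n / n.factorial) * s^n := fun s => by rw [mul_pow]; ring
        simp_rw [h]
        rw [intervalIntegral.integral_const_mul, integral_pow]
        have hfac : ((n+1).factorial : ℝ) = (n+1) * n.factorial := by
          rw [Nat.factorial_succ]; push_cast; ring
        have hn0 : (n.factorial : ℝ) ≠ 0 := Nat.cast_ne_zero.mpr n.factorial_ne_zero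
        rw [hfac, mul_pow]
        field_simp
        ring
      have hval : (0:ℝ) ≤ C * (C*t)^(n+1) / (n+1).factorial := by positivity
      have key : ‖∫ s in (0:ℝ)..t, F s‖ ≤ C * (C*t)^(n+1) / (n+1).factorial := by
        rw [hint, abs_of_nonneg hval] at hnorm
        exact hnorm
      constructor
      · rw [hequ t htT x, (hz _ habs).1, zero_add]
        exact key
      · rw [heqv t htT x, (hz _ habs).2, zero_add]
        exact key
  intro t x ht0 htm hx
  have htend : Filter.Tendsto (fun n : ℕ => C * ((C*t)^n / n.factorial))
      Filter.atTop (nhds 0) := by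
    simpa using (FloorSemiring.tendsto_pow_div_factorial_atTop (K := ℝ) (C*t)).const_mul C
  constructor
  · have h0 : ‖u t x‖ ≤ 0 := ge_of_tendsto' htend (fun n => by
      rw [← mul_div_assoc]; exact (bound n t x ht0 htm hx).1)
    exact norm_le_zero_iff.mp h0
  · have h0 : ‖v t x‖ ≤ 0 := ge_of_tendsto' htend (fun n => by
      rw [← mul_div_assoc]; exact (bound n t x ht0 htm hx).2)
    exact norm_le_zero_iff.mp h0

/-- Finite speed of propagation for the coupled system of transport equations
`∂ₜu± ± ∂ₓu± = u±v±`, `∂ₜv± ± ∂ₓv± = u±v±` (in Duhamel integral form): if the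
bounded measurable solution has initial data vanishing on `{|x−x₀| < R}`, then
it vanishes on the backward light cone `{|x−x₀| < R−t}`. -/
theorem finite_speed_of_propagation
    (T : ℝ) (hT : 0 < T)
    (up um vp vm : ℝ → ℝ → ℂ)
    (up0 um0 vp0 vm0 : ℝ → ℂ)
    (hupmeas : Measurable (Function.uncurry up))
    (hummeas : Measurable (Function.uncurry um))
    (hvpmeas : Measurable (Function.uncurry vp))
    (hvmmeas : Measurable (Function.uncurry vm))
    (hup0meas : Measurable up0) (hum0meas : Measurable um0)
    (hvp0meas : Measurable vp0) (hvm0meas : Measurable vm0)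
    (hbdd : ∃ C : ℝ, ∀ t ∈ Icc (0:ℝ) T, ∀ x : ℝ,
      ‖up t x‖ ≤ C ∧ ‖um t x‖ ≤ C ∧ ‖vp t x‖ ≤ C ∧ ‖vm t x‖ ≤ C)
    (hbdd0 : ∃ C : ℝ, ∀ x : ℝ,
      ‖up0 x‖ ≤ C ∧ ‖um0 x‖ ≤ C ∧ ‖vp0 x‖ ≤ C ∧ ‖vm0 x‖ ≤ C)
    (hequp : ∀ t ∈ Icc (0:ℝ) T, ∀ x : ℝ,
      up t x = up0 (x - t) +
        (∫ s in (0:ℝ)..t, up s (x - (t - s)) * vp s (x - (t - s))))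
    (hequm : ∀ t ∈ Icc (0:ℝ) T, ∀ x : ℝ,
      um t x = um0 (x + t) +
        (∫ s in (0:ℝ)..t, um s (x + (t - s)) * vm s (x + (t - s))))
    (heqvp : ∀ t ∈ Icc (0:ℝ) T, ∀ x : ℝ,
      vp t x = vp0 (x - t) +
        (∫ s in (0:ℝ)..t, up s (x - (t - s)) * vp s (x - (t - s))))
    (heqvm : ∀ t ∈ Icc (0:ℝ) T, ∀ x : ℝ,
      vm t x = vm0 (x + t) +
        (∫ s in (0:ℝ)..t, um s (x + (t - s)) * vm s (x + (t - s))))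
    (x₀ R : ℝ) (hR : 0 < R)
    (hzero : ∀ x : ℝ, |x - x₀| < R →
      up0 x = 0 ∧ um0 x = 0 ∧ vp0 x = 0 ∧ vm0 x = 0) :
    ∀ t x : ℝ, 0 < t → t < min T R → |x - x₀| < R - t →
      up t x = 0 ∧ um t x = 0 ∧ vp t x = 0 ∧ vm t x = 0 := by
  obtain ⟨C, hC⟩ := hbdd
  set C' : ℝ := max C 0 with hC'
  have hC'0 : 0 ≤ C' := le_max_right _ _
  have hbp : ∀ t ∈ Icc (0:ℝ) T, ∀ x : ℝ, ‖up t x‖ ≤ C' ∧ ‖vp t x‖ ≤ C' := fun t ht x =>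
    ⟨(hC t ht x).1.trans (le_max_left _ _), (hC t ht x).2.2.1.trans (le_max_left _ _)⟩
  have hbm : ∀ t ∈ Icc (0:ℝ) T, ∀ x : ℝ, ‖um t x‖ ≤ C' ∧ ‖vm t x‖ ≤ C' := fun t ht x =>
    ⟨(hC t ht x).2.1.trans (le_max_left _ _), (hC t ht x).2.2.2.trans (le_max_left _ _)⟩
  have hp := fsp_aux T up vp up0 vp0 hupmeas hvpmeas C' hC'0 hbp 1 (by norm_num)
    (by
      intro t ht x
      simpa using hequp t ht x)
    (by
      intro t ht x
      simpa using heqvp t ht x)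
    x₀ R (fun x hx => ⟨(hzero x hx).1, (hzero x hx).2.2.1⟩)
  have hm := fsp_aux T um vm um0 vm0 hummeas hvmmeas C' hC'0 hbm (-1) (by norm_num)
    (by
      intro t ht x
      have h1 : x - (-1)*t = x + t := by ring
      have h2 : ∀ s : ℝ, x - (-1)*(t-s) = x + (t-s) := fun s => by ring
      simp only [h1, h2]
      exact hequm t ht x)
    (by
      intro t ht x
      have h1 : x - (-1)*t = x + t := by ring
      have h2 : ∀ s : ℝ, x - (-1)*(t-s) = x + (t-s) := fun s => by ring
      simp only [h1, h2]
      exact heqvm t ht x)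
    x₀ R (fun x hx => ⟨(hzero x hx).2.1, (hzero x hx).2.2.2⟩)
  intro t x ht0 htm hx
  obtain ⟨h1, h3⟩ := hp t x (le_of_lt ht0) htm hx
  obtain ⟨h2, h4⟩ := hm t x (le_of_lt ht0) htm hx
  exact ⟨h1, h2, h3, h4⟩
end

section
/- Let T > 0 and let (u₊⁽¹⁾, u₋⁽¹⁾, v₊⁽¹⁾, v₋⁽¹⁾) and (u₊⁽²⁾, u₋⁽²⁾, v₊⁽²⁾, v₋⁽²⁾) be two families of bounded measurable functions [0,T] × ℝ → ℂ satisfying, for all (t,x) ∈ [0,T] × ℝ and for i = 1, 2: u±⁽ⁱ⁾(t,x) = u±₀⁽ⁱ⁾(x∓t) + ∫₀ᵗ (u±⁽ⁱ⁾v±⁽ⁱ⁾)(s, x∓(t−s)) ds and v±⁽ⁱ⁾(t,x) = v±₀⁽ⁱ⁾(x∓t) + ∫₀ᵗ (u±⁽ⁱ⁾v±⁽ⁱ⁾)(s, x∓(t−s)) ds, where the initial data are bounded measurable. If for some x₀ ∈ ℝ and R > 0 one has u±₀⁽¹⁾(x) = u±₀⁽²⁾(x) and v±₀⁽¹⁾(x)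 = v±₀⁽²⁾(x) for all |x − x₀| < R, then u±⁽¹⁾(t,x) = u±⁽²⁾(t,x) and v±⁽¹⁾(t,x) = v±⁽²⁾(t,x) for all 0 < t < min(T, R) and |x − x₀| < R − t. -/
open MeasureTheory Set

/-- The family `(u₊,u₋,v₊,v₋)` satisfies the Duhamel integral equations of the
coupled system `∂ₜu± ± ∂ₓu± = u±v±`, `∂ₜv± ± ∂ₓv± = u±v±` on `[0,T]` with the
given initial data. -/
def SolvesQuadTransport (T : ℝ) (up um vp vm : ℝ → ℝ → ℂ)
    (up0 um0 vp0 vm0 : ℝ → ℂ) : Prop :=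
  ∀ t ∈ Set.Icc (0:ℝ) T, ∀ x : ℝ,
    up t x = up0 (x - t) +
        (∫ s in (0:ℝ)..t, up s (x - (t - s)) * vp s (x - (t - s))) ∧
    um t x = um0 (x + t) +
        (∫ s in (0:ℝ)..t, um s (x + (t - s)) * vm s (x + (t - s))) ∧
    vp t x = vp0 (x - t) +
        (∫ s in (0:ℝ)..t, up s (x - (t - s)) * vp s (x - (t - s))) ∧
    vm t x = vm0 (x + t) +
        (∫ s in (0:ℝ)..t, um s (x + (t - s)) * vm s (x + (t - s)))

/-- The family is bounded and measurable on `[0,T] × ℝ`, with bounded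
measurable initial data. -/
def BddMeasFamily (T : ℝ) (up um vp vm : ℝ → ℝ → ℂ)
    (up0 um0 vp0 vm0 : ℝ → ℂ) : Prop :=
  Measurable (Function.uncurry up) ∧ Measurable (Function.uncurry um) ∧
  Measurable (Function.uncurry vp) ∧ Measurable (Function.uncurry vm) ∧
  Measurable up0 ∧ Measurable um0 ∧ Measurable vp0 ∧ Measurable vm0 ∧
  (∃ C : ℝ, ∀ t ∈ Set.Icc (0:ℝ) T, ∀ x : ℝ,
    ‖up t x‖ ≤ C ∧ ‖um t x‖ ≤ C ∧ ‖vp t x‖ ≤ C ∧ ‖vm t x‖ ≤ C) ∧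
  (∃ C : ℝ, ∀ x : ℝ, ‖up0 x‖ ≤ C ∧ ‖um0 x‖ ≤ C ∧ ‖vp0 x‖ ≤ C ∧ ‖vm0 x‖ ≤ C)

/-- Key uniqueness lemma for a single coupled pair of characteristics moving
with speed `c`, `|c| ≤ 1`. -/
lemma quad_transport_key (T : ℝ) (hT : 0 < T) (c : ℝ) (hc : |c| ≤ 1)
    (u1 v1 u2 v2 : ℝ → ℝ → ℂ) (u01 v01 u02 v02 : ℝ → ℂ)
    (hmu1 : Measurable (Function.uncurry u1)) (hmv1 : Measurable (Function.uncurry v1))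
    (hmu2 : Measurable (Function.uncurry u2)) (hmv2 : Measurable (Function.uncurry v2))
    (C : ℝ)
    (hC : ∀ t ∈ Set.Icc (0:ℝ) T, ∀ x : ℝ,
      ‖u1 t x‖ ≤ C ∧ ‖v1 t x‖ ≤ C ∧ ‖u2 t x‖ ≤ C ∧ ‖v2 t x‖ ≤ C)
    (he1 : ∀ t ∈ Set.Icc (0:ℝ) T, ∀ x : ℝ, u1 t x = u01 (x + c*t) +
      ∫ s in (0:ℝ)..t, u1 s (x + c*(t-s)) * v1 s (x + c*(t-s)))
    (he1' : ∀ t ∈ Set.Icc (0:ℝ) T, ∀ x : ℝ, v1 t x = v01 (x + c*t) +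
      ∫ s in (0:ℝ)..t, u1 s (x + c*(t-s)) * v1 s (x + c*(t-s)))
    (he2 : ∀ t ∈ Set.Icc (0:ℝ) T, ∀ x : ℝ, u2 t x = u02 (x + c*t) +
      ∫ s in (0:ℝ)..t, u2 s (x + c*(t-s)) * v2 s (x + c*(t-s)))
    (he2' : ∀ t ∈ Set.Icc (0:ℝ) T, ∀ x : ℝ, v2 t x = v02 (x + c*t) +
      ∫ s in (0:ℝ)..t, u2 s (x + c*(t-s)) * v2 s (x + c*(t-s)))
    (x₀ R : ℝ)
    (hdata : ∀ x : ℝ, |x - x₀| < R → u01 x = u02 x ∧ v01 x = v02 x) :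
    ∀ t x : ℝ, 0 ≤ t → t < min T R → |x - x₀| < R - t →
      u1 t x = u2 t x ∧ v1 t x = v2 t x := by
  have hC0 : 0 ≤ C := (norm_nonneg _).trans (hC 0 ⟨le_rfl, hT.le⟩ 0).1
  -- integrability of the nonlinear terms along characteristics
  have hint : ∀ (t x : ℝ), t ∈ Set.Icc (0:ℝ) T →
      ∀ (w z : ℝ → ℝ → ℂ), Measurable (Function.uncurry w) →
      Measurable (Function.uncurry z) →
      (∀ s ∈ Set.Icc (0:ℝ) T, ∀ y : ℝ, ‖w s y‖ ≤ C) →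
      (∀ s ∈ Set.Icc (0:ℝ) T, ∀ y : ℝ, ‖z s y‖ ≤ C) →
      IntervalIntegrable (fun s => w s (x + c*(t-s)) * z s (x + c*(t-s))) volume 0 t := by
    intro t x ht w z hw hz hwB hzB
    have hmap : Measurable (fun s : ℝ => (s, x + c*(t-s))) :=
      measurable_id.prodMk (measurable_const.add ((measurable_const.sub measurable_id).const_mul c))
    have hmeas : Measurable (fun s => w s (x + c*(t-s)) * z s (x + c*(t-s))) :=
      (hw.comp hmap).mul (hz.comp hmap)
    rw [intervalIntegrable_iff]
    apply Measure.integrableOn_of_bounded (M := C*C)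
    · rw [Set.uIoc_of_le ht.1, Real.volume_Ioc]
      exact ENNReal.ofReal_ne_top
    · exact hmeas.aestronglyMeasurable
    · filter_upwards [ae_restrict_mem measurableSet_uIoc] with s hs
      rw [Set.uIoc_of_le ht.1] at hs
      have hsT : s ∈ Set.Icc (0:ℝ) T := ⟨hs.1.le, hs.2.trans ht.2⟩
      rw [norm_mul]
      exact mul_le_mul (hwB s hsT _) (hzB s hsT _) (norm_nonneg _) hC0
  -- main iterated estimate
  have main : ∀ n : ℕ, ∀ t x : ℝ, 0 ≤ t → t < min T R → |x - x₀| < R - t →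
      ‖u1 t x - u2 t x‖ ≤ 2*C*(2*C*t)^n / n.factorial ∧
      ‖v1 t x - v2 t x‖ ≤ 2*C*(2*C*t)^n / n.factorial := by
    intro n
    induction n with
    | zero =>
      intro t x ht htm hx
      have htT : t ∈ Set.Icc (0:ℝ) T := ⟨ht, (lt_min_iff.mp htm).1.le⟩
      simp only [pow_zero, Nat.factorial_zero, Nat.cast_one, mul_one, div_one]
      obtain ⟨h1, h2, h3, h4⟩ := hC t htT x
      constructor
      · calc ‖u1 t x - u2 t x‖ ≤ ‖u1 t x‖ + ‖u2 t x‖ := norm_sub_le _ _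
          _ ≤ 2*C := by linarith
      · calc ‖v1 t x - v2 t x‖ ≤ ‖v1 t x‖ + ‖v2 t x‖ := norm_sub_le _ _
          _ ≤ 2*C := by linarith
    | succ n ih =>
      intro t x ht htm hx
      have htT : t ∈ Set.Icc (0:ℝ) T := ⟨ht, (lt_min_iff.mp htm).1.le⟩
      have htR : t < R := (lt_min_iff.mp htm).2
      have hct : |c*t| ≤ t := by
        rw [abs_mul, abs_of_nonneg ht]
        nlinarith [abs_nonneg c]
      have hx0 : |x + c*t - x₀| < R := by
        have h1 : |x + c*t - x₀| ≤ |x - x₀| + |c*t| := by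
          have h2 : x + c*t - x₀ = (x - x₀) + c*t := by ring
          rw [h2]; exact abs_add_le _ _
        linarith
      have hi1 := hint t x htT u1 v1 hmu1 hmv1 (fun s hs y => (hC s hs y).1)
        (fun s hs y => (hC s hs y).2.1)
      have hi2 := hint t x htT u2 v2 hmu2 hmv2 (fun s hs y => (hC s hs y).2.2.1)
        (fun s hs y => (hC s hs y).2.2.2)
      set F : ℝ → ℂ := fun s => u1 s (x + c*(t-s)) * v1 s (x + c*(t-s))
        - u2 s (x + c*(t-s)) * v2 s (x + c*(t-s)) with hF
      have hdiffu : u1 t x - u2 t x = ∫ s in (0:ℝ)..t, F s := by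
        rw [he1 t htT x, he2 t htT x, (hdata _ hx0).1, hF,
          intervalIntegral.integral_sub hi1 hi2]
        ring
      have hdiffv : v1 t x - v2 t x = ∫ s in (0:ℝ)..t, F s := by
        rw [he1' t htT x, he2' t htT x, (hdata _ hx0).2, hF,
          intervalIntegral.integral_sub hi1 hi2]
        ring
      set K : ℝ := 2*C*(2*C)^n / n.factorial * (2*C) with hK
      have hKnn : 0 ≤ K := by positivity
      have hbound : ‖∫ s in (0:ℝ)..t, F s‖ ≤ K * (t^(n+1) / (n+1)) := by
        have hptw : ∀ᵐ s ∂(volume.restrict (Set.uIoc 0 t)), ‖F s‖ ≤ K * s^n := by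
          filter_upwards [ae_restrict_mem measurableSet_uIoc] with s hs
          rw [Set.uIoc_of_le ht] at hs
          have hsT : s ∈ Set.Icc (0:ℝ) T := ⟨hs.1.le, hs.2.trans htT.2⟩
          have hsm : s < min T R := lt_of_le_of_lt hs.2 htm
          have hyx : |x + c*(t-s) - x₀| < R - s := by
            have hts : (0:ℝ) ≤ t - s := by linarith [hs.2]
            have h1 : |c*(t-s)| ≤ t - s := by
              rw [abs_mul, abs_of_nonneg hts]
              nlinarith [abs_nonneg c]
            have h2 : x + c*(t-s) - x₀ = (x - x₀) + c*(t-s) := by ring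
            have h3 : |x + c*(t-s) - x₀| ≤ |x - x₀| + |c*(t-s)| := by
              rw [h2]; exact abs_add_le _ _
            linarith
          obtain ⟨ihu, ihv⟩ := ih s (x + c*(t-s)) hs.1.le hsm hyx
          set y := x + c*(t-s)
          have hexp : F s = u1 s y * (v1 s y - v2 s y) + (u1 s y - u2 s y) * v2 s y := by
            rw [hF]; ring
          have hE : (0:ℝ) ≤ 2*C*(2*C*s)^n / n.factorial := by
            have hs0 : (0:ℝ) ≤ s := hs.1.le
            positivity
          calc ‖F s‖ ≤ ‖u1 s y‖ * ‖v1 s y - v2 s y‖ + ‖u1 s y - u2 s y‖ * ‖v2 s y‖ := by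
                rw [hexp]
                refine (norm_add_le _ _).trans ?_
                rw [norm_mul, norm_mul]
            _ ≤ C * (2*C*(2*C*s)^n / n.factorial) + (2*C*(2*C*s)^n / n.factorial) * C := by
                gcongr
                · exact (hC s hsT y).1
                · exact (hC s hsT y).2.2.2
            _ = K * s^n := by
                rw [hK, mul_pow]; ring
        have hgint : IntervalIntegrable (fun s => K * s^n) volume 0 t :=
          (continuous_const.mul (continuous_pow n)).intervalIntegrable 0 t
        have h := intervalIntegral.norm_integral_le_abs_of_norm_le hptw hgint
        have hval : (∫ s in (0:ℝ)..t, K * s^n) = K * (t^(n+1) / (n+1)) := by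
          rw [intervalIntegral.integral_const_mul, integral_pow]
          norm_num
        rw [hval] at h
        refine h.trans_eq (abs_of_nonneg ?_)
        positivity
      have htarget : 2*C*(2*C*t)^(n+1) / (n+1).factorial = K * (t^(n+1) / (n+1)) := by
        rw [hK, mul_pow, Nat.factorial_succ, Nat.cast_mul, Nat.cast_add, Nat.cast_one]
        have hfac : (n.factorial : ℝ) ≠ 0 := Nat.cast_ne_zero.mpr n.factorial_ne_zero
        have hn1 : ((n:ℝ) + 1) ≠ 0 := by positivity
        field_simp
        ring
      rw [htarget]
      constructor
      · rw [hdiffu]; exact hbound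
      · rw [hdiffv]; exact hbound
  intro t x ht htm hx
  have hlim : Filter.Tendsto (fun n : ℕ => 2*C*(2*C*t)^n / n.factorial)
      Filter.atTop (nhds 0) := by
    have h := FloorSemiring.tendsto_pow_div_factorial_atTop (K := ℝ) (2*C*t)
    have h2 := h.const_mul (2*C)
    rw [mul_zero] at h2
    convert h2 using 2 with n
    ring
  constructor
  · have hle : ‖u1 t x - u2 t x‖ ≤ 0 :=
      ge_of_tendsto' hlim (fun n => (main n t x ht htm hx).1)
    rw [← sub_eq_zero]
    exact norm_le_zero_iff.mp hle
  · have hle : ‖v1 t x - v2 t x‖ ≤ 0 :=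
      ge_of_tendsto' hlim (fun n => (main n t x ht htm hx).2)
    rw [← sub_eq_zero]
    exact norm_le_zero_iff.mp hle

/-- Local uniqueness inside the backward light cone for the coupled system of
transport equations `∂ₜu± ± ∂ₓu± = u±v±`, `∂ₜv± ± ∂ₓv± = u±v±`: two bounded
measurable solutions whose initial data agree on `{|x−x₀| < R}` agree on
`{|x−x₀| < R−t}`. -/
theorem local_uniqueness_light_cone
    (T : ℝ) (hT : 0 < T)
    (up1 um1 vp1 vm1 up2 um2 vp2 vm2 : ℝ → ℝ → ℂ)
    (up01 um01 vp01 vm01 up02 um02 vp02 vm02 : ℝ → ℂ)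
    (hbm1 : BddMeasFamily T up1 um1 vp1 vm1 up01 um01 vp01 vm01)
    (hbm2 : BddMeasFamily T up2 um2 vp2 vm2 up02 um02 vp02 vm02)
    (heq1 : SolvesQuadTransport T up1 um1 vp1 vm1 up01 um01 vp01 vm01)
    (heq2 : SolvesQuadTransport T up2 um2 vp2 vm2 up02 um02 vp02 vm02)
    (x₀ R : ℝ) (hR : 0 < R)
    (hdata : ∀ x : ℝ, |x - x₀| < R →
      up01 x = up02 x ∧ um01 x = um02 x ∧ vp01 x = vp02 x ∧ vm01 x = vm02 x) :
    ∀ t x : ℝ, 0 < t → t < min T R → |x - x₀| < R - t →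
      up1 t x = up2 t x ∧ um1 t x = um2 t x ∧
      vp1 t x = vp2 t x ∧ vm1 t x = vm2 t x := by
  obtain ⟨hmup1, hmum1, hmvp1, hmvm1, -, -, -, -, ⟨C1, hC1⟩, -⟩ := hbm1
  obtain ⟨hmup2, hmum2, hmvp2, hmvm2, -, -, -, -, ⟨C2, hC2⟩, -⟩ := hbm2
  set C : ℝ := max C1 C2 with hCdef
  have hCp : ∀ t ∈ Set.Icc (0:ℝ) T, ∀ x : ℝ,
      ‖up1 t x‖ ≤ C ∧ ‖vp1 t x‖ ≤ C ∧ ‖up2 t x‖ ≤ C ∧ ‖vp2 t x‖ ≤ C := by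
    intro t ht x
    obtain ⟨a1, -, a3, -⟩ := hC1 t ht x
    obtain ⟨b1, -, b3, -⟩ := hC2 t ht x
    exact ⟨a1.trans (le_max_left _ _), a3.trans (le_max_left _ _),
      b1.trans (le_max_right _ _), b3.trans (le_max_right _ _)⟩
  have hCm : ∀ t ∈ Set.Icc (0:ℝ) T, ∀ x : ℝ,
      ‖um1 t x‖ ≤ C ∧ ‖vm1 t x‖ ≤ C ∧ ‖um2 t x‖ ≤ C ∧ ‖vm2 t x‖ ≤ C := by
    intro t ht x
    obtain ⟨-, a2, -, a4⟩ := hC1 t ht x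
    obtain ⟨-, b2, -, b4⟩ := hC2 t ht x
    exact ⟨a2.trans (le_max_left _ _), a4.trans (le_max_left _ _),
      b2.trans (le_max_right _ _), b4.trans (le_max_right _ _)⟩
  have hplus := quad_transport_key T hT (-1) (by norm_num) up1 vp1 up2 vp2
    up01 vp01 up02 vp02 hmup1 hmvp1 hmup2 hmvp2 C hCp
    (by intro t ht x
        have h := (heq1 t ht x).1
        simp only [neg_one_mul, ← sub_eq_add_neg]
        exact h)
    (by intro t ht x
        have h := (heq1 t ht x).2.2.1
        simp only [neg_one_mul, ← sub_eq_add_neg]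
        exact h)
    (by intro t ht x
        have h := (heq2 t ht x).1
        simp only [neg_one_mul, ← sub_eq_add_neg]
        exact h)
    (by intro t ht x
        have h := (heq2 t ht x).2.2.1
        simp only [neg_one_mul, ← sub_eq_add_neg]
        exact h)
    x₀ R (fun x hx => ⟨(hdata x hx).1, (hdata x hx).2.2.1⟩)
  have hminus := quad_transport_key T hT 1 (by norm_num) um1 vm1 um2 vm2
    um01 vm01 um02 vm02 hmum1 hmvm1 hmum2 hmvm2 C hCm
    (by intro t ht x
        have h := (heq1 t ht x).2.1
        simp only [one_mul]
        exact h)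
    (by intro t ht x
        have h := (heq1 t ht x).2.2.2
        simp only [one_mul]
        exact h)
    (by intro t ht x
        have h := (heq2 t ht x).2.1
        simp only [one_mul]
        exact h)
    (by intro t ht x
        have h := (heq2 t ht x).2.2.2
        simp only [one_mul]
        exact h)
    x₀ R (fun x hx => ⟨(hdata x hx).2.1, (hdata x hx).2.2.2⟩)
  intro t x ht htm hx
  obtain ⟨hu, hv⟩ := hplus t x ht.le htm hx
  obtain ⟨hu', hv'⟩ := hminus t x ht.le htm hx
  exact ⟨hu, hu', hv, hv'⟩
end

section
/- Let m > 0, let A : ℝ × ℝ → ℝ be continuous, let φ : [0,∞) × ℝ → ℂ be continuous, and let ψ : [0,∞) × ℝ → ℂ be continuously differentiable, satisfy ψ(0,x) = 0 for all x, and solve ∂ₜψ(t,x) + ∂ₓψ(t,x) = i A(t,x) ψ(t,x) − i m φ(t,x) for all t ≥ 0, x ∈ ℝ. Then for all t ≥ 0 and x ∈ ℝ, |ψ(t,x)| ≤ m ∫₀ᵗ |φ(s, x − t + s)| ds. -/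
open intervalIntegral MeasureTheory

/-- Pointwise bound for the mass-coupled component of the Dirac part: if
`∂ₜψ + ∂ₓψ = iAψ − imφ` with real-valued `A` and `ψ(0,·) = 0`, then
`|ψ(t,x)| ≤ m ∫₀ᵗ |φ(s, x−t+s)| ds` for all `t ≥ 0`. -/
theorem intrinsic_pointwise_bound
    (m : ℝ) (hm : 0 < m)
    (A : ℝ × ℝ → ℝ) (hA : Continuous A)
    (φ : ℝ × ℝ → ℂ) (hφ : Continuous φ)
    (ψ : ℝ × ℝ → ℂ) (hψ : ContDiff ℝ 1 ψ)
    (hψ0 : ∀ x : ℝ, ψ (0, x) = 0)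
    (hpde : ∀ t x : ℝ, 0 ≤ t →
      deriv (fun τ : ℝ => ψ (τ, x)) t + deriv (fun y : ℝ => ψ (t, y)) x
        = Complex.I * (A (t, x) : ℂ) * ψ (t, x) - Complex.I * (m : ℂ) * φ (t, x)) :
    ∀ t x : ℝ, 0 ≤ t →
      ‖ψ (t, x)‖ ≤ m * (∫ s in (0:ℝ)..t, ‖φ (s, x - t + s)‖) := by
  intro t x ht
  set c : ℝ → ℝ × ℝ := fun s => (s, x - t + s) with hc_def
  have hc : Continuous c := by fun_prop
  have hcd : ∀ s : ℝ, HasDerivAt c (1, 1) s := fun s =>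
    HasDerivAt.prodMk (hasDerivAt_id s) ((hasDerivAt_id s).const_add (x - t))
  have hψd := hψ.differentiable one_ne_zero
  set g : ℝ → ℂ := fun s => ψ (c s) with hg_def
  -- derivative of g
  have hgd : ∀ s : ℝ, 0 ≤ s →
      HasDerivAt g (Complex.I * (A (c s) : ℂ) * g s - Complex.I * (m : ℂ) * φ (c s)) s := by
    intro s hs
    have hF : HasFDerivAt ψ (fderiv ℝ ψ (c s)) ((s, x - t + s) : ℝ × ℝ) :=
      (hψd _).hasFDerivAt
    have h1 : HasDerivAt (fun τ : ℝ => ψ (τ, x - t + s)) (fderiv ℝ ψ (c s) (1, 0)) s := by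
      have : HasDerivAt (fun τ : ℝ => ((τ, x - t + s) : ℝ × ℝ)) (1, 0) s :=
        HasDerivAt.prodMk (hasDerivAt_id s) (hasDerivAt_const s _)
      exact hF.comp_hasDerivAt s this
    have h2 : HasDerivAt (fun y : ℝ => ψ (s, y)) (fderiv ℝ ψ (c s) (0, 1)) (x - t + s) := by
      have : HasDerivAt (fun y : ℝ => ((s, y) : ℝ × ℝ)) (0, 1) (x - t + s) :=
        HasDerivAt.prodMk (hasDerivAt_const _ s) (hasDerivAt_id _)
      exact hF.comp_hasDerivAt _ this
    have hg : HasDerivAt g (fderiv ℝ ψ (c s) (1, 1)) s := hF.comp_hasDerivAt s (hcd s)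
    have hsum : fderiv ℝ ψ (c s) (1, 1)
        = fderiv ℝ ψ (c s) (1, 0) + fderiv ℝ ψ (c s) (0, 1) := by
      rw [← map_add]; norm_num
    have := hpde s (x - t + s) hs
    rw [h1.deriv, h2.deriv] at this
    rw [hsum, this] at hg
    exact hg
  set B : ℝ → ℝ := fun s => ∫ u in (0:ℝ)..s, A (c u) with hB_def
  have hBd : ∀ s : ℝ, HasDerivAt B (A (c s)) s := by
    intro s
    exact intervalIntegral.integral_hasDerivAt_right
      ((hA.comp hc).intervalIntegrable _ _)
      ((hA.comp hc).stronglyMeasurable.stronglyMeasurableAtFilter)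
      (hA.comp hc).continuousAt
  set h : ℝ → ℂ := fun s => Complex.exp (-(Complex.I * (B s : ℂ))) * g s with hh_def
  have hhd : ∀ s : ℝ, 0 ≤ s →
      HasDerivAt h (-(Complex.I * (m : ℂ)) * (Complex.exp (-(Complex.I * (B s : ℂ))) * φ (c s))) s := by
    intro s hs
    have he : HasDerivAt (fun s => Complex.exp (-(Complex.I * (B s : ℂ))))
        (Complex.exp (-(Complex.I * (B s : ℂ))) * (-(Complex.I * (A (c s) : ℂ)))) s := by
      have hB' : HasDerivAt (fun s => -(Complex.I * (B s : ℂ)))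
          (-(Complex.I * (A (c s) : ℂ))) s := by
        have := ((hBd s).ofReal_comp).const_mul Complex.I
        exact this.neg
      simpa [mul_comm] using hB'.cexp
    have := he.mul (hgd s hs)
    exact this.congr_deriv (by ring)
  -- h t - h 0 = ∫ h'
  have hBmeas : Continuous B := by
    have : Continuous fun s => ∫ u in (0:ℝ)..s, A (c u) :=
      intervalIntegral.continuous_primitive ((hA.comp hc).intervalIntegrable) 0
    exact this
  have hcont' : Continuous fun s =>
      -(Complex.I * (m : ℂ)) * (Complex.exp (-(Complex.I * (B s : ℂ))) * φ (c s)) := by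
    fun_prop
  have hFTC : (∫ s in (0:ℝ)..t,
      -(Complex.I * (m : ℂ)) * (Complex.exp (-(Complex.I * (B s : ℂ))) * φ (c s)))
      = h t - h 0 := by
    apply intervalIntegral.integral_eq_sub_of_hasDerivAt
    · intro s hs
      rw [Set.uIcc_of_le ht] at hs
      exact hhd s hs.1
    · exact hcont'.intervalIntegrable _ _
  have h0 : h 0 = 0 := by
    simp [hh_def, hg_def, hc_def, hψ0]
  have hnorm_exp : ∀ s : ℝ, ‖Complex.exp (-(Complex.I * (B s : ℂ)))‖ = 1 := by
    intro s
    rw [Complex.norm_exp]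
    simp
  have hht : ‖h t‖ = ‖ψ (t, x)‖ := by
    have : c t = (t, x) := by simp [hc_def]
    rw [hh_def]
    simp only [norm_mul, hnorm_exp, one_mul, hg_def, this]
  calc ‖ψ (t, x)‖ = ‖h t - h 0‖ := by rw [h0, sub_zero, hht]
    _ = ‖∫ s in (0:ℝ)..t,
        -(Complex.I * (m : ℂ)) * (Complex.exp (-(Complex.I * (B s : ℂ))) * φ (c s))‖ := by
        rw [hFTC]
    _ ≤ ∫ s in (0:ℝ)..t,
        ‖-(Complex.I * (m : ℂ)) * (Complex.exp (-(Complex.I * (B s : ℂ))) * φ (c s))‖ :=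
        intervalIntegral.norm_integral_le_integral_norm ht
    _ = ∫ s in (0:ℝ)..t, m * ‖φ (c s)‖ := by
        congr 1; funext s
        rw [norm_mul, norm_mul, hnorm_exp, one_mul, norm_neg, norm_mul]
        simp [abs_of_pos hm]
    _ = m * ∫ s in (0:ℝ)..t, ‖φ (s, x - t + s)‖ := by
        rw [intervalIntegral.integral_const_mul]
end
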